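/- arXiv:2011.07604 — 10 statements merged into one kernel-verified Lean document; each statement's English description precedes it below -/
import Mathlib

section
/- Let n ≥ 1 and τ ≥ 1 be integers, let P be an n×n row-stochastic matrix, and let π ∈ ℝⁿ satisfy π ≥ 0 entrywise, Σᵢ πᵢ = 1 and πᵀP = πᵀ (π is a stationary distribution of P). If μ ∈ ℝ satisfies μ ≤ Σ_{k=1}^{τ} F_k(i,j) for every pair of indices i,j ∈ {1,…,n}, then μ ≤ τ/n. In particular, min_{i,j} Σ_{k=1}^{τ} F_k(i,j) ≤ τ/n. -/
/-- First-hitting-time probability matrices: `hitF P t` is `F_{t+1}`, i.e.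
`F_1 = P` and `F_{k+1} = P (F_k - Diag(F_k))`. -/
def hitF {α : Type*} [Fintype α] [DecidableEq α] (P : Matrix α α ℝ) : ℕ → Matrix α α ℝ
  | 0 => P
  | k + 1 => P * (hitF P k - Matrix.diagonal fun i => hitF P k i i)

lemma hitF_nonneg {α : Type*} [Fintype α] [DecidableEq α] (P : Matrix α α ℝ)
    (hP0 : ∀ i j, 0 ≤ P i j) : ∀ t i j, 0 ≤ hitF P t i j := by
  intro t
  induction t with
  | zero => exact hP0
  | succ k ih =>
    intro i j
    show 0 ≤ (P * (hitF P k - Matrix.diagonal fun i => hitF P k i i)) i j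
    rw [Matrix.mul_apply]
    apply Finset.sum_nonneg
    intro l _
    apply mul_nonneg (hP0 i l)
    simp only [Matrix.sub_apply, Matrix.diagonal_apply, sub_nonneg]
    by_cases h : l = j
    · subst h; simp
    · simp [h, ih l j]

lemma hitF_le_pow {α : Type*} [Fintype α] [DecidableEq α] (P : Matrix α α ℝ)
    (hP0 : ∀ i j, 0 ≤ P i j) : ∀ t i j, hitF P t i j ≤ (P ^ (t + 1)) i j := by
  intro t
  induction t with
  | zero => intro i j; simp [hitF, pow_one]
  | succ k ih =>
    intro i j
    show (P * (hitF P k - Matrix.diagonal fun i => hitF P k i i)) i j ≤ (P ^ (k + 2)) i j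
    have : P ^ (k + 2) = P * P ^ (k + 1) := by rw [pow_succ']
    rw [this, Matrix.mul_apply, Matrix.mul_apply]
    apply Finset.sum_le_sum
    intro l _
    apply mul_le_mul_of_nonneg_left _ (hP0 i l)
    refine le_trans ?_ (ih l j)
    simp only [Matrix.sub_apply, Matrix.diagonal_apply]
    by_cases h : l = j
    · subst h; simpa using hitF_nonneg P hP0 k l l
    · simp [h]

lemma stationary_pow (n : ℕ) (P : Matrix (Fin n) (Fin n) ℝ)
    (π : Fin n → ℝ) (hπP : ∀ j, ∑ i, π i * P i j = π j) :
    ∀ k j, ∑ i, π i * (P ^ (k + 1)) i j = π j := by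
  intro k
  induction k with
  | zero => simpa [pow_one] using hπP
  | succ m ih =>
    intro j
    have hpow : P ^ (m + 2) = P ^ (m + 1) * P := by rw [pow_succ]
    calc ∑ i, π i * (P ^ (m + 2)) i j
        = ∑ i, ∑ l, π i * ((P ^ (m + 1)) i l * P l j) := by
          simp [hpow, Matrix.mul_apply, Finset.mul_sum]
      _ = ∑ l, (∑ i, π i * (P ^ (m + 1)) i l) * P l j := by
          rw [Finset.sum_comm]
          simp [Finset.sum_mul, mul_assoc]
      _ = ∑ l, π l * P l j := by simp [ih]
      _ = π j := hπP j

lemma key_bound (n τ : ℕ) (hn : 1 ≤ n) (hτ : 1 ≤ τ)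
    (P : Matrix (Fin n) (Fin n) ℝ)
    (hP0 : ∀ i j, 0 ≤ P i j)
    (π : Fin n → ℝ) (hπ0 : ∀ i, 0 ≤ π i) (hπ1 : ∑ i, π i = 1)
    (hπP : ∀ j, ∑ i, π i * P i j = π j)
    (μ : ℝ) (hμ : ∀ i j : Fin n, μ ≤ ∑ t ∈ Finset.range τ, hitF P t i j) :
    μ ≤ (τ : ℝ) / n := by
  have hj : ∀ j : Fin n, μ ≤ (τ : ℝ) * π j := by
    intro j
    calc μ = ∑ i, π i * μ := by rw [← Finset.sum_mul, hπ1, one_mul]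
      _ ≤ ∑ i, π i * ∑ t ∈ Finset.range τ, hitF P t i j := by
          apply Finset.sum_le_sum
          intro i _
          exact mul_le_mul_of_nonneg_left (hμ i j) (hπ0 i)
      _ ≤ ∑ i, π i * ∑ t ∈ Finset.range τ, (P ^ (t + 1)) i j := by
          apply Finset.sum_le_sum
          intro i _
          apply mul_le_mul_of_nonneg_left _ (hπ0 i)
          exact Finset.sum_le_sum fun t _ => hitF_le_pow P hP0 t i j
      _ = ∑ t ∈ Finset.range τ, ∑ i, π i * (P ^ (t + 1)) i j := by
          rw [Finset.sum_comm]
          simp [Finset.mul_sum]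
      _ = ∑ t ∈ Finset.range τ, π j := by
          simp [stationary_pow n P π hπP]
      _ = (τ : ℝ) * π j := by simp [mul_comm]
  have hsum : (n : ℝ) * μ ≤ (τ : ℝ) := by
    calc (n : ℝ) * μ = ∑ _j : Fin n, μ := by simp [mul_comm]
      _ ≤ ∑ j : Fin n, (τ : ℝ) * π j := Finset.sum_le_sum fun j _ => hj j
      _ = (τ : ℝ) := by rw [← Finset.mul_sum, hπ1, mul_one]
  have hn' : (0 : ℝ) < n := by exact_mod_cast hn
  rw [le_div_iff₀ hn']
  linarith [hsum]

/-- Universal upper bound for the value of the game: if `μ` lower bounds all capture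
probabilities `ℙ(T_ij ≤ τ)`, then `μ ≤ τ/n`; in particular the minimum capture
probability is at most `τ/n`. -/
theorem stmt_0 (n τ : ℕ) (hn : 1 ≤ n) (hτ : 1 ≤ τ)
    (P : Matrix (Fin n) (Fin n) ℝ)
    (hP0 : ∀ i j, 0 ≤ P i j) (hP1 : ∀ i, ∑ j, P i j = 1)
    (π : Fin n → ℝ) (hπ0 : ∀ i, 0 ≤ π i) (hπ1 : ∑ i, π i = 1)
    (hπP : ∀ j, ∑ i, π i * P i j = π j)
    (μ : ℝ) (hμ : ∀ i j : Fin n, μ ≤ ∑ t ∈ Finset.range τ, hitF P t i j) :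
    μ ≤ (τ : ℝ) / n ∧
      Finset.univ.inf' ⟨((⟨0, hn⟩ : Fin n), (⟨0, hn⟩ : Fin n)), Finset.mem_univ _⟩
        (fun p : Fin n × Fin n => ∑ t ∈ Finset.range τ, hitF P t p.1 p.2) ≤ (τ : ℝ) / n := by
  constructor
  · exact key_bound n τ hn hτ P hP0 π hπ0 hπ1 hπP μ hμ
  · apply key_bound n τ hn hτ P hP0 π hπ0 hπ1 hπP
    intro i j
    exact Finset.inf'_le _ (Finset.mem_univ (i, j))
end

section
/- Let τ ≥ 1 and m ≥ 1 be integers, set n = τ·m, and let σ be a cyclic permutation of {1,…,τ} (a single τ-cycle). Define the n×n matrix P, with states indexed by pairs (a,u) ∈ {1,…,τ}×{1,…,m}, by P((a,u),(b,v)) = 1/m if b = σ(a) and P((a,u),(b,v)) = 0 otherwise (equivalently, P = Π₀ ⊗ (τ/n)·𝟙𝟙ᵀ where Π₀ is the permutation matrix of σ). Then P is row-stochastic and for every pair of states x, y one has Σ_{k=1}^{τ} F_k(x,y) = τ/n; in particular the minimum capture probability min_{x,y} ℙ(T_xy ≤ τ) equals τ/n, attaining the universal upper bound. -/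
set_option linter.unusedVariables false

section aux
variable {τ : ℕ} (σ : Equiv.Perm (Fin τ))

lemma fix_pow_mul' {a : Fin τ} {j : ℕ} (h : (σ ^ j) a = a) (q : ℕ) : (σ ^ (q * j)) a = a := by
  induction q with
  | zero => simp
  | succ q ih =>
      rw [Nat.succ_mul, pow_add, Equiv.Perm.mul_apply, h, ih]

lemma shift_mod' {a : Fin τ} {j : ℕ} (h : (σ ^ j) a = a) (h0 : 0 < j) (k : ℕ) :
    (σ ^ k) a = (σ ^ (k % j)) a := by
  conv_lhs => rw [← Nat.div_add_mod k j, Nat.add_comm]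
  rw [pow_add, Equiv.Perm.mul_apply, Nat.mul_comm j (k / j), fix_pow_mul' σ h]

lemma no_fix' (hσ : ∀ a b : Fin τ, ∃ k : ℕ, (σ ^ k) a = b)
    {a : Fin τ} {j : ℕ} (h0 : 0 < j) (hj : j < τ) : (σ ^ j) a ≠ a := by
  intro h
  have hsub : (Finset.univ : Finset (Fin τ)) ⊆
      Finset.image (fun k => (σ ^ k) a) (Finset.range j) := by
    intro b _
    obtain ⟨k, hk⟩ := hσ a b
    exact Finset.mem_image.2 ⟨k % j, Finset.mem_range.2 (Nat.mod_lt _ h0),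
      by rw [← shift_mod' σ h h0 k, hk]⟩
  have h1 : τ ≤ (Finset.image (fun k => (σ ^ k) a) (Finset.range j)).card := by
    simpa using Finset.card_le_card hsub
  have h2 : (Finset.image (fun k => (σ ^ k) a) (Finset.range j)).card ≤ j :=
    le_trans Finset.card_image_le (by simp)
  omega

lemma pow_tau_fix' (hσ : ∀ a b : Fin τ, ∃ k : ℕ, (σ ^ k) a = b) (hτ : 1 ≤ τ)
    (a : Fin τ) : (σ ^ τ) a = a := by
  classical
  have hNpos : 0 < orderOf σ := orderOf_pos σ
  have hNa : (σ ^ orderOf σ) a = a := by rw [pow_orderOf_eq_one]; rfl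
  have hex : ∃ d, 0 < d ∧ (σ ^ d) a = a := ⟨orderOf σ, hNpos, hNa⟩
  set d := Nat.find hex with hdef
  have hd : 0 < d ∧ (σ ^ d) a = a := Nat.find_spec hex
  have hmin : ∀ j, j < d → ¬ (0 < j ∧ (σ ^ j) a = a) := fun j hj => Nat.find_min hex hj
  have key : ∀ i j, i < j → j < d → (σ ^ i) a ≠ (σ ^ j) a := by
    intro i j hlt hjd heq
    have h2 : (σ ^ j) a = (σ ^ i) ((σ ^ (j - i)) a) := by
      rw [← Equiv.Perm.mul_apply, ← pow_add, Nat.add_sub_cancel' hlt.le]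
    have h4 := (Equiv.injective (σ ^ i)) (heq.trans h2)
    exact hmin (j - i) (by omega) ⟨by omega, h4.symm⟩
  have hinj : Set.InjOn (fun i => (σ ^ i) a) (Finset.range d) := by
    intro i hi j hj hij
    simp only [Finset.coe_range, Set.mem_Iio] at hi hj
    by_contra hne
    rcases Nat.lt_or_ge i j with h | h
    · exact key i j h hj hij
    · exact key j i (by omega) hi hij.symm
  have hcard : d ≤ τ := by
    have := Finset.card_le_card_of_injOn (fun i => (σ ^ i) a)
      (fun _ _ => Finset.mem_univ _) hinj
    simpa using this
  have hge : ¬ d < τ := fun hlt => no_fix' σ hσ hd.1 hlt hd.2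
  have hdτ : d = τ := by omega
  rw [hdτ] at hd
  exact hd.2
end aux

/-- Optimal strategy in the complete graph when `τ` divides `n = τ·m`:
`P = Π₀ ⊗ (τ/n)·𝟙𝟙ᵀ` (with `Π₀` the permutation matrix of a single `τ`-cycle `σ`)
is row-stochastic and every capture probability `ℙ(T_xy ≤ τ)` equals `τ/n`. -/
theorem stmt_2 (τ m : ℕ) (hτ : 1 ≤ τ) (hm : 1 ≤ m)
    (σ : Equiv.Perm (Fin τ)) (hσ : ∀ a b : Fin τ, ∃ k : ℕ, (σ ^ k) a = b)
    (P : Matrix (Fin τ × Fin m) (Fin τ × Fin m) ℝ)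
    (hP : ∀ x y : Fin τ × Fin m, P x y = if y.1 = σ x.1 then (1 : ℝ) / m else 0) :
    (∀ x y, 0 ≤ P x y) ∧ (∀ x, ∑ y, P x y = 1) ∧
    (∀ x y : Fin τ × Fin m,
      ∑ t ∈ Finset.range τ, hitF P t x y = (τ : ℝ) / (τ * m)) := by
  have hm0 : (m : ℝ) ≠ 0 := Nat.cast_ne_zero.2 (by omega)
  have hτ0 : (τ : ℝ) ≠ 0 := Nat.cast_ne_zero.2 (by omega)
  -- key formula
  have key : ∀ t, t < τ → ∀ x y : Fin τ × Fin m,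
      hitF P t x y = if y.1 = (σ ^ (t + 1)) x.1 then (1 : ℝ) / m else 0 := by
    intro t
    induction t with
    | zero => intro _ x y; simpa [hitF, pow_one] using hP x y
    | succ t ih =>
      intro ht x y
      have ht' : t < τ := by omega
      have hdiag : (Matrix.diagonal fun i => hitF P t i i)
          = (0 : Matrix (Fin τ × Fin m) (Fin τ × Fin m) ℝ) := by
        ext i j
        rcases eq_or_ne i j with rfl | hij
        · rw [Matrix.diagonal_apply_eq, ih ht' i i,
            if_neg (fun h => no_fix' σ hσ (Nat.succ_pos t) ht h.symm)]
          simp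
        · rw [Matrix.diagonal_apply_ne _ hij]; simp
      show (P * (hitF P t - Matrix.diagonal fun i => hitF P t i i)) x y = _
      rw [hdiag, sub_zero, Matrix.mul_apply]
      have : ∀ z : Fin τ × Fin m, P x z * hitF P t z y
          = if z.1 = σ x.1 then (if y.1 = (σ ^ (t + 1)) z.1 then 1/(m:ℝ) * (1/m) else 0) else 0 := by
        intro z
        rw [hP x z, ih ht' z y]
        by_cases h1 : z.1 = σ x.1 <;> by_cases h2 : y.1 = (σ ^ (t+1)) z.1 <;>
          simp [h1, h2]
      rw [Finset.sum_congr rfl (fun z _ => this z)]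
      rw [Fintype.sum_prod_type]
      simp only []
      have hpow : (σ ^ (t + 1)) (σ x.1) = (σ ^ (t + 2)) x.1 := by
        rw [← Equiv.Perm.mul_apply, ← pow_succ]
      rw [Finset.sum_eq_single (σ x.1)]
      · by_cases h2 : y.1 = (σ ^ (t + 2)) x.1
        · have : ∀ u : Fin m, (if ((σ x.1, u) : Fin τ × Fin m).1 = σ x.1 then
              (if y.1 = (σ ^ (t+1)) ((σ x.1, u) : Fin τ × Fin m).1 then 1/(m:ℝ) * (1/m) else 0) else 0)
              = 1/(m:ℝ) * (1/m) := by
            intro u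
            rw [if_pos rfl, if_pos]
            rw [h2, ← hpow]
          rw [Finset.sum_congr rfl (fun u _ => this u)]
          rw [if_pos (by rw [h2])]
          simp [Finset.card_univ]
          field_simp
        · have : ∀ u : Fin m, (if ((σ x.1, u) : Fin τ × Fin m).1 = σ x.1 then
              (if y.1 = (σ ^ (t+1)) ((σ x.1, u) : Fin τ × Fin m).1 then 1/(m:ℝ) * (1/m) else 0) else 0)
              = 0 := by
            intro u
            rw [if_pos rfl, if_neg]
            intro h
            apply h2
            rw [h]; exact hpow
          rw [Finset.sum_congr rfl (fun u _ => this u), if_neg]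
          · simp
          · intro h; apply h2; rw [h]
      · intro b _ hb
        apply Finset.sum_eq_zero
        intro u _
        rw [if_neg hb]
      · intro h; exact absurd (Finset.mem_univ _) h
  refine ⟨?_, ?_, ?_⟩
  · intro x y; rw [hP]; positivity
  · intro x
    have : ∀ y : Fin τ × Fin m, P x y = if y.1 = σ x.1 then (1:ℝ)/m else 0 := hP x
    rw [Finset.sum_congr rfl (fun y _ => this y), Fintype.sum_prod_type]
    rw [Finset.sum_eq_single (σ x.1)]
    · simp [Finset.card_univ]; field_simp
    · intro b _ hb; apply Finset.sum_eq_zero; intro u _; rw [if_neg hb]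
    · intro h; exact absurd (Finset.mem_univ _) h
  · intro x y
    -- find unique t₀
    obtain ⟨k, hk⟩ := hσ x.1 y.1
    have hτfix := pow_tau_fix' σ hσ hτ x.1
    -- replace k by k + τ ≥ 1 and reduce
    have hk' : (σ ^ (k + τ)) x.1 = y.1 := by
      rw [pow_add, Equiv.Perm.mul_apply, hτfix, hk]
    set k' := k + τ with hk'def
    have hk'pos : 1 ≤ k' := by omega
    set t₀ := (k' - 1) % τ with ht₀def
    have ht₀lt : t₀ < τ := Nat.mod_lt _ (by omega)
    have ht₀ : (σ ^ (t₀ + 1)) x.1 = y.1 := by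
      have hdm := Nat.div_add_mod (k' - 1) τ
      have h5 : k' = (t₀ + 1) + τ * ((k' - 1) / τ) := by omega
      rw [← hk']
      conv_rhs => rw [h5, pow_add, Equiv.Perm.mul_apply,
        Nat.mul_comm τ ((k' - 1) / τ), fix_pow_mul' σ hτfix]
    have hform : ∀ t ∈ Finset.range τ,
        hitF P t x y = if y.1 = (σ ^ (t + 1)) x.1 then (1:ℝ)/m else 0 :=
      fun t ht => key t (Finset.mem_range.1 ht) x y
    rw [Finset.sum_congr rfl hform]
    rw [Finset.sum_eq_single t₀]
    · rw [if_pos ht₀.symm]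
      field_simp
    · intro t ht hne
      rw [if_neg]
      intro h
      have hlt := Finset.mem_range.1 ht
      have heq : (σ ^ (t + 1)) x.1 = (σ ^ (t₀ + 1)) x.1 := by rw [← h, ht₀]
      rcases Nat.lt_or_ge t t₀ with hc | hc
      · have hA : (t₀ - t) + (t + 1) = t₀ + 1 := by omega
        have : (σ ^ (t₀ - t)) ((σ ^ (t+1)) x.1) = (σ ^ (t+1)) x.1 := by
          rw [← Equiv.Perm.mul_apply, ← pow_add, hA]
          exact heq.symm
        exact no_fix' σ hσ (by omega) (by omega) this
      · have hc' : t₀ < t := by omega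
        have hA : (t - t₀) + (t₀ + 1) = t + 1 := by omega
        have : (σ ^ (t - t₀)) ((σ ^ (t₀+1)) x.1) = (σ ^ (t₀+1)) x.1 := by
          rw [← Equiv.Perm.mul_apply, ← pow_add, hA]
          exact heq
        exact no_fix' σ hσ (by omega) (by omega) this
    · intro h; exact absurd (Finset.mem_range.2 ht₀lt) h
end

section
/- For all integers n ≥ 3 and all integers τ with 1 ≤ τ ≤ n − 1, one has (n^τ − (n−1)^τ)/(τ · n^{τ−1}) ≥ 1 − 1/e, where e is Euler's number. (This is the suboptimality factor of the complete-graph random walk: the ratio of its capture probability 1 − (1 − 1/n)^τ to the upper bound τ/n.) -/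
lemma aux_exp_secant (x : ℝ) (h0 : 0 ≤ x) (h1 : x ≤ 1) :
    Real.exp (-x) ≤ 1 - (1 - Real.exp (-1)) * x := by
  have h := convexOn_exp.2 (Set.mem_univ (0:ℝ)) (Set.mem_univ (-1:ℝ))
      (by linarith : (0:ℝ) ≤ 1 - x) h0 (by ring)
  simp only [smul_eq_mul, mul_zero, zero_add, mul_neg, mul_one, Real.exp_zero] at h
  nlinarith [h]

/-- Constant factor optimality of the complete-graph random walk: for integers
`n ≥ 3` and `1 ≤ τ ≤ n - 1`, `(n^τ - (n-1)^τ)/(τ·n^{τ-1}) ≥ 1 - 1/e`. -/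
theorem stmt_4 (n τ : ℕ) (hn : 3 ≤ n) (hτ1 : 1 ≤ τ) (hτ2 : τ ≤ n - 1) :
    1 - 1 / Real.exp 1 ≤
      ((n : ℝ) ^ τ - ((n : ℝ) - 1) ^ τ) / ((τ : ℝ) * (n : ℝ) ^ (τ - 1)) := by
  obtain ⟨k, rfl⟩ : ∃ k, τ = k + 1 := ⟨τ-1, (Nat.succ_pred_eq_of_pos hτ1).symm⟩
  have hn0 : (0:ℝ) < n := by positivity
  have hn3 : (3:ℝ) ≤ n := by exact_mod_cast hn
  have ht0 : (0:ℝ) < ((k+1:ℕ):ℝ) := by positivity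
  have htn : ((k+1:ℕ):ℝ) ≤ n := by
    have : k + 1 ≤ n := le_trans hτ2 (Nat.sub_le n 1)
    exact_mod_cast this
  have hx0 : 0 ≤ ((k+1:ℕ):ℝ)/n := by positivity
  have hx1 : ((k+1:ℕ):ℝ)/n ≤ 1 := (div_le_one hn0).mpr htn
  have key := aux_exp_secant (((k+1:ℕ):ℝ)/n) hx0 hx1
  have h1 : ((n:ℝ)-1) ≤ n * Real.exp (-(1/n)) := by
    have h := Real.add_one_le_exp (-(1/(n:ℝ)))
    have h' := mul_le_mul_of_nonneg_left h (le_of_lt hn0)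
    have he : (n:ℝ) * (-(1/n) + 1) = n - 1 := by field_simp; ring
    linarith
  have hb : (0:ℝ) ≤ (n:ℝ) - 1 := by linarith
  have h2 : ((n:ℝ)-1)^(k+1) ≤ ((n:ℝ) * Real.exp (-(1/n)))^(k+1) :=
    pow_le_pow_left₀ hb h1 (k+1)
  have h3 : ((n:ℝ) * Real.exp (-(1/n)))^(k+1) = (n:ℝ)^(k+1) * Real.exp (-(((k+1:ℕ):ℝ)/n)) := by
    rw [mul_pow, ← Real.exp_nat_mul]
    congr 1
    push_cast
    field_simp
  rw [h3] at h2
  rw [le_div_iff₀ (by positivity : (0:ℝ) < ((k+1:ℕ):ℝ) * (n:ℝ)^(k+1-1))]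
  have he : Real.exp (-1) = 1 / Real.exp 1 := by
    rw [Real.exp_neg, one_div]
  have hNτ : (0:ℝ) < (n:ℝ)^(k+1) := by positivity
  have hfrac : (n:ℝ)^(k+1) * (((k+1:ℕ):ℝ)/n) = ((k+1:ℕ):ℝ) * (n:ℝ)^(k+1-1) := by
    simp only [Nat.add_sub_cancel, pow_succ]
    field_simp
  have h4 : (n:ℝ)^(k+1) * (1 - (1 - Real.exp (-1)) * (((k+1:ℕ):ℝ)/n)) =
      (n:ℝ)^(k+1) - (1 - Real.exp (-1)) * (((k+1:ℕ):ℝ) * (n:ℝ)^(k+1-1)) := by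
    rw [← hfrac]; ring
  have h5 := mul_le_mul_of_nonneg_left key (le_of_lt hNτ)
  rw [← he]
  linarith
end

section
/- Fix an integer n ≥ 3 and define g(τ) = (n^τ − (n−1)^τ)/(τ · n^{τ−1}) for real τ > 0. Then g is nonincreasing: for all real numbers 0 < τ₁ ≤ τ₂ one has g(τ₂) ≤ g(τ₁). -/
/-- For a fixed integer `n ≥ 3`, the function
`g(τ) = (n^τ - (n-1)^τ)/(τ·n^{τ-1})` (real powers) is nonincreasing on `(0, ∞)`. -/
theorem stmt_5 (n : ℕ) (hn : 3 ≤ n) (τ₁ τ₂ : ℝ) (h1 : 0 < τ₁) (h12 : τ₁ ≤ τ₂) :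
    ((n : ℝ) ^ τ₂ - ((n : ℝ) - 1) ^ τ₂) / (τ₂ * (n : ℝ) ^ (τ₂ - 1)) ≤
      ((n : ℝ) ^ τ₁ - ((n : ℝ) - 1) ^ τ₁) / (τ₁ * (n : ℝ) ^ (τ₁ - 1)) := by
  have hN : (3 : ℝ) ≤ (n : ℝ) := by exact_mod_cast hn
  have hN0 : (0 : ℝ) < (n : ℝ) := by linarith
  have hN1 : (0 : ℝ) ≤ (n : ℝ) - 1 := by linarith
  set r : ℝ := ((n : ℝ) - 1) / (n : ℝ) with hr
  have hr0 : 0 ≤ r := div_nonneg hN1 hN0.le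
  have hr1 : r ≤ 1 := by
    rw [hr, div_le_one hN0]; linarith
  have h2 : 0 < τ₂ := lt_of_lt_of_le h1 h12
  have key : ∀ τ : ℝ, 0 < τ →
      ((n : ℝ) ^ τ - ((n : ℝ) - 1) ^ τ) / (τ * (n : ℝ) ^ (τ - 1)) =
        (n : ℝ) * ((1 - r ^ τ) / τ) := by
    intro τ hτ
    have hdiv : r ^ τ = ((n : ℝ) - 1) ^ τ / (n : ℝ) ^ τ := Real.div_rpow hN1 hN0.le τ
    have hsub : (n : ℝ) ^ (τ - 1) = (n : ℝ) ^ τ / (n : ℝ) := by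
      rw [Real.rpow_sub hN0, Real.rpow_one]
    have hpos : (0 : ℝ) < (n : ℝ) ^ τ := Real.rpow_pos_of_pos hN0 τ
    rw [hdiv, hsub]
    field_simp
  rw [key τ₁ h1, key τ₂ h2]
  have hth : (1 - r ^ τ₂) / τ₂ ≤ (1 - r ^ τ₁) / τ₁ := by
    rw [div_le_div_iff₀ h2 h1]
    have hp0 : 0 ≤ τ₁ / τ₂ := by positivity
    have hp1 : τ₁ / τ₂ ≤ 1 := by rw [div_le_one h2]; exact h12
    have hrτ0 : 0 ≤ r ^ τ₂ := Real.rpow_nonneg hr0 τ₂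
    have hs : -1 ≤ r ^ τ₂ - 1 := by linarith
    have hb := rpow_one_add_le_one_add_mul_self hs hp0 hp1
    have heq : (1 + (r ^ τ₂ - 1)) ^ (τ₁ / τ₂) = r ^ τ₁ := by
      have : (1 : ℝ) + (r ^ τ₂ - 1) = r ^ τ₂ := by ring
      rw [this, ← Real.rpow_mul hr0]
      congr 1
      field_simp
    rw [heq] at hb
    have := mul_le_mul_of_nonneg_left hb h2.le
    rw [mul_add, mul_comm] at this
    have hτ : τ₂ * (τ₁ / τ₂ * (r ^ τ₂ - 1)) = τ₁ * (r ^ τ₂ - 1) := by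
      field_simp
    nlinarith
  have := mul_le_mul_of_nonneg_left hth hN0.le
  linarith
end

section
/- Define h(n) = n/(n−1) − (1 − 1/n)^{n−2} for integers n ≥ 3. Then h is nonincreasing, i.e., h(n₂) ≤ h(n₁) for all integers 3 ≤ n₁ ≤ n₂, and moreover h(n) ≥ 1 − 1/e for every integer n ≥ 3, where e is Euler's number. -/
open Real

set_option maxHeartbeats 1000000 in
/-- Core one-step inequality. -/
lemma core_step (m : ℕ) (x : ℝ) (hx : 3 ≤ x) (hm : (m:ℝ) = x - 2) :
    (x+1)/((x+1)-1) - (1 - 1/(x+1))^(m+1) ≤ x/(x-1) - (1-1/x)^m := by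
  have hx0 : (0:ℝ) < x := by linarith
  have hx1 : (0:ℝ) < x - 1 := by linarith
  have hx2 : (0:ℝ) < x + 1 := by linarith
  have hxx : (0:ℝ) < x^2 - 1 := by nlinarith
  set a : ℝ := 1 - 1/x with ha
  set b : ℝ := 1 - 1/(x+1) with hb
  have ha0 : 0 ≤ a := by
    rw [ha, sub_nonneg, div_le_one hx0]; linarith
  have hb0 : 0 < b := by
    rw [hb, sub_pos, div_lt_one hx2]; linarith
  have hbeq : b = x/(x+1) := by rw [hb]; field_simp; ring
  have haeq : a = (x-1)/x := by rw [ha]; field_simp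
  clear_value a b
  set A : ℝ := a^m with hA
  set B : ℝ := b^(m+1) with hB
  have hA0 : 0 ≤ A := pow_nonneg ha0 m
  have hB0 : 0 ≤ B := pow_nonneg (le_of_lt hb0) (m+1)
  -- Bernoulli: (1 + 1/(x²-1))^m ≥ 1 + m/(x²-1)
  have hber : 1 + (m:ℝ) * (1/(x^2-1)) ≤ (1 + 1/(x^2-1))^m := by
    apply one_add_mul_le_pow
    have : (0:ℝ) ≤ 1/(x^2-1) := by positivity
    linarith
  have hba : b = a * (1 + 1/(x^2-1)) := by
    rw [haeq, hbeq]; field_simp; ring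
  have hBge : A * ((1 + (m:ℝ) * (1/(x^2-1))) * b) ≤ B := by
    have h1 : b^m = A * (1 + 1/(x^2-1))^m := by
      rw [hba, mul_pow, hA]
    have h2 : A * (1 + (m:ℝ) * (1/(x^2-1))) ≤ b^m := by
      rw [h1]
      exact mul_le_mul_of_nonneg_left hber hA0
    have hBB : B = b^m * b := by rw [hB, pow_succ]
    rw [hBB]
    calc A * ((1 + (m:ℝ) * (1/(x^2-1))) * b) = (A * (1 + (m:ℝ)*(1/(x^2-1)))) * b := by ring
    _ ≤ b^m * b := mul_le_mul_of_nonneg_right h2 (le_of_lt hb0)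
  clear_value A B
  -- clear denominators in hBge
  have h1' : A * (x*(x^2+x-3)) ≤ B * ((x+1)*(x^2-1)) := by
    have e : (1 + (m:ℝ) * (1/(x^2-1))) * b = (x*(x^2+x-3))/((x+1)*(x^2-1)) := by
      rw [hm, hbeq]; field_simp; ring
    rw [e, mul_div_assoc', div_le_iff₀ (by positivity)] at hBge
    linarith
  -- A ≤ x/(2x-2)
  have hnd : (-1:ℝ)/x = -(1/x) := by ring
  have haexp : a ≤ Real.exp (-1/x) := by
    have h := Real.add_one_le_exp (-1/x)
    rw [ha]; linarith [h, hnd]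
  have hAexp : A ≤ Real.exp (-((m:ℝ)/x)) := by
    calc A ≤ (Real.exp (-1/x))^m := by rw [hA]; exact pow_le_pow_left₀ ha0 haexp m
    _ = Real.exp ((m:ℝ) * (-1/x)) := (Real.exp_nat_mul _ _).symm
    _ = Real.exp (-((m:ℝ)/x)) := by congr 1; ring
  have h2x : (0:ℝ) < 2*x - 2 := by linarith
  have hexplb : (2*x-2)/x ≤ Real.exp ((m:ℝ)/x) := by
    have h := Real.add_one_le_exp ((m:ℝ)/x)
    have heq : (m:ℝ)/x + 1 = (2*x-2)/x := by rw [hm]; field_simp; ring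
    linarith [h, heq]
  have h2' : A * (2*x-2) ≤ x := by
    have hgt : (0:ℝ) < (2*x-2)/x := div_pos h2x hx0
    have hinv : Real.exp (-((m:ℝ)/x)) ≤ x/(2*x-2) := by
      rw [Real.exp_neg, ← one_div]
      calc 1/Real.exp ((m:ℝ)/x) ≤ 1/((2*x-2)/x) := one_div_le_one_div_of_le hgt hexplb
      _ = x/(2*x-2) := one_div_div _ _
    have hAle : A ≤ x/(2*x-2) := le_trans hAexp hinv
    rw [← le_div_iff₀ h2x]
    exact hAle
  -- combine
  have step1 : (A - B) * ((x+1)*(x^2-1)) ≤ A * (2*x-1) := by nlinarith [h1']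
  have step2 : A * (x*(2*x-1)) ≤ (x+1)^2 := by
    nlinarith [mul_le_mul_of_nonneg_right h2' (by nlinarith : (0:ℝ) ≤ x*(2*x-1))]
  have final : (A - B) * (x*(x-1)) ≤ 1 := by
    have hpsq : (0:ℝ) < (x+1)^2 := by positivity
    have key : ((A - B) * (x*(x-1))) * (x+1)^2 ≤ 1 * (x+1)^2 := by
      have hh := mul_le_mul_of_nonneg_right step1 (le_of_lt hx0)
      linarith [hh, step2]
    exact le_of_mul_le_mul_right key hpsq
  have hrhs : x/(x-1) - (x+1)/x = 1/(x*(x-1)) := by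
    field_simp; ring
  have hfin : A - B ≤ 1/(x*(x-1)) := by
    rw [le_div_iff₀ (by positivity)]
    exact final
  have hxsimp : (x+1)/((x+1)-1) = (x+1)/x := by ring
  rw [hxsimp]
  linarith [hfin, hrhs]

/-- Core lower bound. -/
lemma core_lb (m : ℕ) (x : ℝ) (hx : 3 ≤ x) (hm : (m:ℝ) = x - 2) :
    1 - 1/Real.exp 1 ≤ x/(x-1) - (1-1/x)^m := by
  have hx0 : (0:ℝ) < x := by linarith
  have hxne : x ≠ 0 := ne_of_gt hx0
  have hx1 : (0:ℝ) < x - 1 := by linarith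
  set a : ℝ := 1 - 1/x with ha
  have ha0 : 0 ≤ a := by rw [ha, sub_nonneg, div_le_one hx0]; linarith
  have haeq : a = (x-1)/x := by rw [ha]; field_simp
  clear_value a
  set A : ℝ := a^m with hA
  have hA0 : 0 ≤ A := pow_nonneg ha0 m
  clear_value A
  set E : ℝ := Real.exp 1 with hEdef
  have hE0 : (0:ℝ) < E := Real.exp_pos 1
  have hElb : (2.7:ℝ) < E := by
    have h := Real.exp_one_gt_d9
    rw [hEdef]; norm_num at h ⊢; linarith
  clear_value E
  have hnd : (-1:ℝ)/x = -(1/x) := by ring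
  have haexp : a ≤ Real.exp (-1/x) := by
    have h := Real.add_one_le_exp (-1/x)
    rw [ha]; linarith [h, hnd]
  have hcast : ((m+2:ℕ):ℝ) * (-1/x) = -1 := by
    push_cast
    rw [hm]
    field_simp
    ring
  have han : a^(m+2) ≤ E⁻¹ := by
    calc a^(m+2) ≤ (Real.exp (-1/x))^(m+2) := pow_le_pow_left₀ ha0 haexp (m+2)
    _ = Real.exp (((m+2:ℕ):ℝ) * (-1/x)) := (Real.exp_nat_mul _ _).symm
    _ = Real.exp (-1) := by rw [hcast]
    _ = E⁻¹ := by rw [hEdef, Real.exp_neg]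
  have hAE : A * (x-1)^2 * E ≤ x^2 := by
    have h1 : A * a^2 * E ≤ 1 := by
      have he2 : a^(m+2) = A * a^2 := by rw [hA, ← pow_add]
      rw [he2] at han
      calc A * a^2 * E ≤ E⁻¹ * E := mul_le_mul_of_nonneg_right han (le_of_lt hE0)
      _ = 1 := inv_mul_cancel₀ (ne_of_gt hE0)
    rw [haeq] at h1
    have e1 : A * ((x-1)/x)^2 * E = A*(x-1)^2*E / x^2 := by rw [div_pow]; ring
    rw [e1, div_le_one (by positivity)] at h1
    exact h1
  rw [sub_le_sub_iff]
  rw [div_add_div _ _ (ne_of_gt hx1) (ne_of_gt hE0), le_div_iff₀ (by positivity)]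
  nlinarith [hAE, mul_nonneg hA0 (le_of_lt hx1), mul_pos (show (0:ℝ) < E - 2.7 by linarith) hx1]

/-- `h(n) = n/(n-1) - (1 - 1/n)^{n-2}` is nonincreasing on integers `n ≥ 3`,
and `h(n) ≥ 1 - 1/e` for every integer `n ≥ 3`. -/
theorem stmt_6 :
    (∀ n₁ n₂ : ℕ, 3 ≤ n₁ → n₁ ≤ n₂ →
      (n₂ : ℝ) / ((n₂ : ℝ) - 1) - (1 - 1 / (n₂ : ℝ)) ^ (n₂ - 2) ≤
        (n₁ : ℝ) / ((n₁ : ℝ) - 1) - (1 - 1 / (n₁ : ℝ)) ^ (n₁ - 2)) ∧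
    (∀ n : ℕ, 3 ≤ n →
      1 - 1 / Real.exp 1 ≤ (n : ℝ) / ((n : ℝ) - 1) - (1 - 1 / (n : ℝ)) ^ (n - 2)) := by
  have step : ∀ n : ℕ, 3 ≤ n →
      ((n+1 : ℕ) : ℝ) / (((n+1:ℕ):ℝ) - 1) - (1 - 1/((n+1:ℕ):ℝ)) ^ ((n+1) - 2) ≤
      (n:ℝ)/((n:ℝ)-1) - (1 - 1/(n:ℝ))^(n-2) := by
    intro n hn
    have hx : (3:ℝ) ≤ (n:ℝ) := by exact_mod_cast hn
    have hm : ((n-2 : ℕ):ℝ) = (n:ℝ) - 2 := by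
      have h2 : (2:ℕ) ≤ n := by omega
      push_cast [h2]; ring
    have h := core_step (n-2) (n:ℝ) hx hm
    have e1 : (n+1) - 2 = (n-2) + 1 := by omega
    have e2 : ((n+1 : ℕ) : ℝ) = (n:ℝ) + 1 := by push_cast; ring
    rw [e1, e2]
    exact h
  constructor
  · intro n₁ n₂ h3 h12
    induction n₂, h12 using Nat.le_induction with
    | base => exact le_refl _
    | succ n hn ih =>
      have hs := step n (by omega)
      linarith
  · intro n hn
    have hx : (3:ℝ) ≤ (n:ℝ) := by exact_mod_cast hn
    have hm : ((n-2 : ℕ):ℝ) = (n:ℝ) - 2 := by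
      have h2 : (2:ℕ) ≤ n := by omega
      push_cast [h2]; ring
    exact core_lb (n-2) (n:ℝ) hx hm
end

section
/- Let P be an n×n row-stochastic matrix and let i, j, k ∈ {1,…,n} be pairwise distinct. Suppose every directed walk from k to j in the transition digraph of P passes through i, i.e., for every finite sequence v_0 = k, v_1, …, v_m = j (m ≥ 1) with P(v_{t}, v_{t+1}) > 0 for all 0 ≤ t < m, there exists some t with v_t = i. Then for every τ ≥ 1, Σ_{t=1}^{τ} F_t(k,j) ≤ Σ_{t=1}^{τ−1} F_t(i,j); in particular ℙ(T_kj ≤ τ) ≤ ℙ(T_ij ≤ τ). -/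
lemma hitF_succ_apply {n : ℕ} (P : Matrix (Fin n) (Fin n) ℝ) (t : ℕ) (a b : Fin n) :
    hitF P (t + 1) a b = ∑ c, P a c * (if c = b then 0 else hitF P t c b) := by
  show (P * (hitF P t - Matrix.diagonal fun i => hitF P t i i)) a b = _
  rw [Matrix.mul_apply]
  refine Finset.sum_congr rfl fun c _ => ?_
  by_cases h : c = b
  · subst h; simp [Matrix.sub_apply, Matrix.diagonal_apply]
  · simp [Matrix.sub_apply, Matrix.diagonal_apply, h]

lemma hitF_nonneg_s7 {n : ℕ} (P : Matrix (Fin n) (Fin n) ℝ) (hP0 : ∀ a b, 0 ≤ P a b) :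
    ∀ t a b, 0 ≤ hitF P t a b := by
  intro t
  induction t with
  | zero => exact hP0
  | succ t ih =>
    intro a b
    rw [hitF_succ_apply]
    refine Finset.sum_nonneg fun c _ => mul_nonneg (hP0 a c) ?_
    by_cases h : c = b <;> simp [h, ih c b]

/-- Cumulative capture probability `ℙ(T_aj ≤ τ)`. -/
def cumG {n : ℕ} (P : Matrix (Fin n) (Fin n) ℝ) (j : Fin n) (τ : ℕ) (a : Fin n) : ℝ :=
  ∑ t ∈ Finset.range τ, hitF P t a j

lemma cumG_nonneg {n : ℕ} (P : Matrix (Fin n) (Fin n) ℝ) (hP0 : ∀ a b, 0 ≤ P a b)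
    (j : Fin n) (τ : ℕ) (a : Fin n) : 0 ≤ cumG P j τ a :=
  Finset.sum_nonneg fun t _ => hitF_nonneg_s7 P hP0 t a j

lemma cumG_mono {n : ℕ} (P : Matrix (Fin n) (Fin n) ℝ) (hP0 : ∀ a b, 0 ≤ P a b)
    (j : Fin n) (τ : ℕ) (a : Fin n) : cumG P j τ a ≤ cumG P j (τ + 1) a := by
  unfold cumG
  rw [Finset.sum_range_succ]
  exact le_add_of_nonneg_right (hitF_nonneg_s7 P hP0 τ a j)

lemma cumG_succ {n : ℕ} (P : Matrix (Fin n) (Fin n) ℝ) (j : Fin n) (τ : ℕ) (a : Fin n) :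
    cumG P j (τ + 1) a = P a j + ∑ b, P a b * (if b = j then 0 else cumG P j τ b) := by
  unfold cumG
  rw [Finset.sum_range_succ']
  have h1 : ∀ t ∈ Finset.range τ, hitF P (t + 1) a j
      = ∑ c, P a c * (if c = j then 0 else hitF P t c j) :=
    fun t _ => hitF_succ_apply P t a j
  rw [Finset.sum_congr rfl h1, Finset.sum_comm]
  have h2 : hitF P 0 a j = P a j := rfl
  rw [h2, add_comm]
  congr 1
  refine Finset.sum_congr rfl fun c _ => ?_
  by_cases h : c = j
  · simp [h]
  · simp only [h, if_false, Finset.mul_sum]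

lemma key {n : ℕ} (P : Matrix (Fin n) (Fin n) ℝ)
    (hP0 : ∀ a b, 0 ≤ P a b) (hP1 : ∀ a, ∑ b, P a b = 1)
    (i j : Fin n) (A : Fin n → Prop)
    (hAi : ∀ a, A a → a ≠ i)
    (hAj0 : ∀ a, A a → P a j = 0)
    (hAclose : ∀ a b, A a → 0 < P a b → b ≠ i → b ≠ j → A b) :
    ∀ τ a, A a → cumG P j (τ + 1) a ≤ cumG P j τ i := by
  intro τ
  induction τ with
  | zero =>
    intro a ha
    have : cumG P j 1 a = P a j := by
      unfold cumG; rw [Finset.sum_range_one]; rfl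
    rw [this, hAj0 a ha]
    simp [cumG]
  | succ τ ih =>
    intro a ha
    rw [cumG_succ, hAj0 a ha, zero_add]
    have hGi : 0 ≤ cumG P j (τ + 1) i := cumG_nonneg P hP0 j _ i
    have hbound : ∀ b : Fin n, P a b * (if b = j then 0 else cumG P j (τ + 1) b)
        ≤ P a b * cumG P j (τ + 1) i := by
      intro b
      by_cases hbj : b = j
      · rw [if_pos hbj, mul_zero]
        exact mul_nonneg (hP0 a b) hGi
      · rw [if_neg hbj]
        by_cases hbi : b = i
        · subst hbi; exact le_refl _
        · rcases lt_or_eq_of_le (hP0 a b) with hpos | heq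
          · have hb : A b := hAclose a b ha hpos hbi hbj
            have : cumG P j (τ + 1) b ≤ cumG P j τ i := ih b hb
            have h2 : cumG P j (τ + 1) b ≤ cumG P j (τ + 1) i :=
              le_trans this (cumG_mono P hP0 j τ i)
            exact mul_le_mul_of_nonneg_left h2 (hP0 a b)
          · rw [← heq]; simp [hGi]
    calc ∑ b, P a b * (if b = j then 0 else cumG P j (τ + 1) b)
        ≤ ∑ b, P a b * cumG P j (τ + 1) i := Finset.sum_le_sum fun b _ => hbound b
      _ = (∑ b, P a b) * cumG P j (τ + 1) i := by rw [Finset.sum_mul]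
      _ = cumG P j (τ + 1) i := by rw [hP1 a, one_mul]

/-- Dominated strategy for the intruder, case (i): if every directed walk from `k` to `j`
in the transition digraph of the row-stochastic matrix `P` passes through `i`, then
`Σ_{t=1}^{τ} F_t(k,j) ≤ Σ_{t=1}^{τ-1} F_t(i,j)`; in particular
`ℙ(T_kj ≤ τ) ≤ ℙ(T_ij ≤ τ)`. -/
theorem stmt_7 (n : ℕ) (P : Matrix (Fin n) (Fin n) ℝ)
    (hP0 : ∀ a b, 0 ≤ P a b) (hP1 : ∀ a, ∑ b, P a b = 1)
    (i j k : Fin n) (hij : i ≠ j) (hik : i ≠ k) (hjk : j ≠ k)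
    (hwalk : ∀ m : ℕ, 1 ≤ m → ∀ v : ℕ → Fin n, v 0 = k → v m = j →
      (∀ t < m, 0 < P (v t) (v (t + 1))) → ∃ t ≤ m, v t = i)
    (τ : ℕ) (hτ : 1 ≤ τ) :
    (∑ t ∈ Finset.range τ, hitF P t k j ≤ ∑ t ∈ Finset.range (τ - 1), hitF P t i j) ∧
    (∑ t ∈ Finset.range τ, hitF P t k j ≤ ∑ t ∈ Finset.range τ, hitF P t i j) := by
  -- The invariant set: states from which every walk to `j` passes through `i`.
  set A : Fin n → Prop := fun a => a ≠ i ∧ a ≠ j ∧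
    (∀ m : ℕ, 1 ≤ m → ∀ v : ℕ → Fin n, v 0 = a → v m = j →
      (∀ t < m, 0 < P (v t) (v (t + 1))) → ∃ t ≤ m, v t = i) with hA
  have hAk : A k := ⟨Ne.symm hik, Ne.symm hjk, hwalk⟩
  have hAi : ∀ a, A a → a ≠ i := fun a ha => ha.1
  have hAj0 : ∀ a, A a → P a j = 0 := by
    intro a ha
    by_contra hne
    have hpos : 0 < P a j := lt_of_le_of_ne (hP0 a j) (Ne.symm hne)
    obtain ⟨t, ht, hti⟩ := ha.2.2 1 le_rfl (fun t => if t = 0 then a else j) (by simp)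
      (by simp) (by intro t ht'; interval_cases t; simpa using hpos)
    interval_cases t
    · exact ha.1 (by simpa using hti)
    · have hji : j = i := by simpa using hti
      exact hij hji.symm
  have hAclose : ∀ a b, A a → 0 < P a b → b ≠ i → b ≠ j → A b := by
    intro a b ha hpos hbi hbj
    refine ⟨hbi, hbj, ?_⟩
    intro m hm v hv0 hvm hedge
    set w : ℕ → Fin n := fun t => if t = 0 then a else v (t - 1) with hw
    have hwe : ∀ t < m + 1, 0 < P (w t) (w (t + 1)) := by
      intro t ht
      match t with
      | 0 => simpa [hw, hv0] using hpos
      | (s + 1) => simpa [hw] using hedge s (by omega)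
    obtain ⟨t, ht, hti⟩ := ha.2.2 (m + 1) (by omega) w (by simp [hw]) (by simp [hw, hvm]) hwe
    match t, ht with
    | 0, _ => exact absurd (by simpa [hw] using hti) ha.1
    | (s + 1), hs => exact ⟨s, by omega, by simpa [hw] using hti⟩
  obtain ⟨s, rfl⟩ : ∃ s, τ = s + 1 := ⟨τ - 1, by omega⟩
  have hmain : cumG P j (s + 1) k ≤ cumG P j s i :=
    key P hP0 hP1 i j A hAi hAj0 hAclose s k hAk
  constructor
  · simpa [cumG] using hmain
  · exact le_trans (by simpa [cumG] using hmain) (by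
      simpa [cumG] using cumG_mono P hP0 j s i)
end

section
/- Let n ≥ 3 and let P be an n×n irreducible row-stochastic matrix (its transition digraph, with edges (a,b) whenever P(a,b) > 0, is strongly connected) in which node 1 is a leaf with unique neighbor 2, i.e., P(1,l) = 0 and P(l,1) = 0 for every l ∉ {1,2}. Let P' be the matrix equal to P in all rows except row 1, where P'(1,1) = 0, P'(1,2) = 1, and P'(1,l) = 0 for l > 2. Then for every τ ≥ 1, min_{i,j} Σ_{t=1}^{τ} F'_t(i,j) ≥ min_{i,j} Σ_{t=1}^{τ} F_t(i,j), where F'_t and F_t are the first-hitting-time probability matrices of P' and P respectively; i.e., sending the agent deterministically from the leaf to its neighbor never decreases the worst-case capture probability. -/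
namespace Stmt10

variable {α : Type*} [Fintype α] [DecidableEq α]

noncomputable def capt (P : Matrix α α ℝ) (τ : ℕ) (i j : α) : ℝ :=
  ∑ t ∈ Finset.range τ, hitF P t i j

lemma capt_zero (P : Matrix α α ℝ) (i j : α) : capt P 0 i j = 0 := by simp [capt]

lemma capt_succ (P : Matrix α α ℝ) (τ : ℕ) (i j : α) :
    capt P (τ + 1) i j = P i j + ∑ k, (if k = j then (0:ℝ) else P i k * capt P τ k j) := by
  have h1 : ∀ t, hitF P (t+1) i j = ∑ k, (if k = j then (0:ℝ) else P i k * hitF P t k j) := by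
    intro t
    show (P * (hitF P t - Matrix.diagonal fun i => hitF P t i i)) i j = _
    rw [Matrix.mul_apply]
    refine Finset.sum_congr rfl fun k _ => ?_
    by_cases hk : k = j
    · subst hk; simp [Matrix.diagonal_apply]
    · simp [Matrix.sub_apply, Matrix.diagonal_apply, hk]
  unfold capt
  rw [Finset.sum_range_succ']
  simp_rw [h1]
  rw [Finset.sum_comm]
  have h2 : ∀ k, (∑ t ∈ Finset.range τ, if k = j then (0:ℝ) else P i k * hitF P t k j)
      = if k = j then (0:ℝ) else P i k * ∑ t ∈ Finset.range τ, hitF P t k j := by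
    intro k
    by_cases hk : k = j <;> simp [hk, Finset.mul_sum]
  simp_rw [h2]
  show _ + hitF P 0 i j = _
  show _ + P i j = _
  ring

lemma capt_nonneg (P : Matrix α α ℝ) (h0 : ∀ a b, 0 ≤ P a b) (τ : ℕ) :
    ∀ i j, 0 ≤ capt P τ i j := by
  induction τ with
  | zero => intro i j; simp [capt_zero]
  | succ τ ih =>
    intro i j
    rw [capt_succ]
    have : (0:ℝ) ≤ ∑ k, (if k = j then (0:ℝ) else P i k * capt P τ k j) := by
      refine Finset.sum_nonneg fun k _ => ?_
      by_cases hk : k = j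
      · simp [hk]
      · simp only [hk, if_false]; exact mul_nonneg (h0 i k) (ih k j)
    linarith [h0 i j]

lemma capt_le_one (P : Matrix α α ℝ) (h0 : ∀ a b, 0 ≤ P a b) (h1 : ∀ a, ∑ b, P a b = 1)
    (τ : ℕ) : ∀ i j, capt P τ i j ≤ 1 := by
  induction τ with
  | zero => intro i j; simp [capt_zero]
  | succ τ ih =>
    intro i j
    rw [capt_succ]
    have hb : ∑ k, (if k = j then (0:ℝ) else P i k * capt P τ k j)
        ≤ ∑ k, (if k = j then (0:ℝ) else P i k) := by
      refine Finset.sum_le_sum fun k _ => ?_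
      by_cases hk : k = j
      · simp [hk]
      · simp only [hk, if_false]
        calc P i k * capt P τ k j ≤ P i k * 1 :=
              mul_le_mul_of_nonneg_left (ih k j) (h0 i k)
          _ = P i k := mul_one _
    have hs : P i j + ∑ k, (if k = j then (0:ℝ) else P i k) = ∑ k, P i k := by
      have : ∀ k : α, (if k = j then (0:ℝ) else P i k)
          = P i k - (if k = j then P i k else 0) := by
        intro k; by_cases hk : k = j <;> simp [hk]
      simp_rw [this]
      rw [Finset.sum_sub_distrib, Finset.sum_ite_eq' Finset.univ j (fun k => P i k)]
      simp
    calc P i j + ∑ k, (if k = j then (0:ℝ) else P i k * capt P τ k j)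
        ≤ P i j + ∑ k, (if k = j then (0:ℝ) else P i k) := by linarith
      _ = ∑ k, P i k := hs
      _ = 1 := h1 i

lemma capt_mono (P : Matrix α α ℝ) (h0 : ∀ a b, 0 ≤ P a b) (τ : ℕ) :
    ∀ i j, capt P τ i j ≤ capt P (τ + 1) i j := by
  induction τ with
  | zero =>
    intro i j; rw [capt_zero]; exact capt_nonneg P h0 1 i j
  | succ τ ih =>
    intro i j
    rw [capt_succ, capt_succ]
    gcongr with k
    by_cases hk : k = j
    · simp [hk]
    · simp only [hk, if_false]
      exact mul_le_mul_of_nonneg_left (ih k j) (h0 i k)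


variable {P P' : Matrix α α ℝ} {z o j : α}

lemma rowz_sum (hzo : z ≠ o) (hPz : ∀ k, k ≠ z → k ≠ o → P z k = 0)
    (hjz : j ≠ z) (hjo : j ≠ o) (f : α → ℝ) :
    ∑ k, (if k = j then (0:ℝ) else P z k * f k) = P z z * f z + P z o * f o := by
  have : ∀ k : α, (if k = j then (0:ℝ) else P z k * f k)
      = (if k = z then P z z * f z else 0) + (if k = o then P z o * f o else 0) := by
    intro k
    by_cases hk1 : k = z
    · subst hk1; simp [hjz.symm ∘ Eq.symm, (Ne.symm hjz), hzo]
    · by_cases hk2 : k = o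
      · subst hk2; simp [Ne.symm hjo, hk1]
      · by_cases hk3 : k = j <;> simp [hk1, hk2, hk3, hjz, hjo, hPz k hk1 hk2]
  simp_rw [this]
  rw [Finset.sum_add_distrib, Finset.sum_ite_eq' Finset.univ z, Finset.sum_ite_eq' Finset.univ o]
  simp

lemma leafC (h0 : ∀ a b, 0 ≤ P a b) (hzo : z ≠ o)
    (hPz : ∀ k, k ≠ z → k ≠ o → P z k = 0) (hsum : P z z + P z o = 1)
    (hjz : j ≠ z) (hjo : j ≠ o) :
    ∀ τ, capt P (τ + 1) z j ≤ capt P τ o j := by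
  have hPzj : P z j = 0 := hPz j hjz hjo
  intro τ
  induction τ with
  | zero =>
    rw [capt_succ, capt_zero, hPzj]
    have : ∀ k : α, (if k = j then (0:ℝ) else P z k * capt P 0 k j) = 0 := by
      intro k; by_cases hk : k = j <;> simp [hk, capt_zero]
    simp [this]
  | succ τ ih =>
    rw [capt_succ, hPzj, rowz_sum hzo hPz hjz hjo]
    have h2 : capt P (τ+1) z j ≤ capt P τ o j := ih
    have h3 : capt P τ o j ≤ capt P (τ+1) o j := capt_mono P h0 τ o j
    nlinarith [h0 z z, h0 z o, capt_nonneg P h0 (τ+1) o j]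

lemma leafE (h0 : ∀ a b, 0 ≤ P a b) (h1 : ∀ a, ∑ b, P a b = 1) (hzo : z ≠ o)
    (hcol : ∀ i, i ≠ z → i ≠ o → P i z = 0) :
    ∀ τ, ∀ i, i ≠ z → i ≠ o → capt P (τ + 1) i z ≤ capt P τ o z := by
  intro τ
  induction τ with
  | zero =>
    intro i hiz hio
    rw [capt_succ, capt_zero, hcol i hiz hio]
    have : ∀ k : α, (if k = z then (0:ℝ) else P i k * capt P 0 k z) = 0 := by
      intro k; by_cases hk : k = z <;> simp [hk, capt_zero]
    simp [this]
  | succ τ ih =>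
    intro i hiz hio
    rw [capt_succ, hcol i hiz hio, zero_add]
    have hb : ∑ k, (if k = z then (0:ℝ) else P i k * capt P (τ+1) k z)
        ≤ ∑ k, (if k = z then (0:ℝ) else P i k) * capt P (τ+1) o z := by
      refine Finset.sum_le_sum fun k _ => ?_
      by_cases hkz : k = z
      · simp [hkz]
      · simp only [hkz, if_false]
        by_cases hko : k = o
        · subst hko; exact le_refl _
        · have := le_trans (ih k hkz hko) (capt_mono P h0 τ o z)
          exact mul_le_mul_of_nonneg_left this (h0 i k)
    have hs : ∑ k, (if k = z then (0:ℝ) else P i k) = 1 := by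
      have : ∀ k : α, (if k = z then (0:ℝ) else P i k) = P i k := by
        intro k; by_cases hk : k = z
        · subst hk; simp [hcol i hiz hio]
        · simp [hk]
      simp_rw [this]; exact h1 i
    rw [← Finset.sum_mul, hs, one_mul] at hb
    exact hb

lemma captP'_eq (heq : ∀ a, a ≠ z → ∀ b, P' a b = P a b) :
    ∀ τ, ∀ i, i ≠ z → capt P' τ i z = capt P τ i z := by
  intro τ
  induction τ with
  | zero => intro i _; rw [capt_zero, capt_zero]
  | succ τ ih =>
    intro i hiz
    rw [capt_succ, capt_succ, heq i hiz]
    congr 1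
    refine Finset.sum_congr rfl fun k _ => ?_
    by_cases hk : k = z
    · simp [hk]
    · simp only [hk, if_false]
      rw [heq i hiz, ih k hk]

lemma rowdet_sum (hP'z : ∀ k, P' z k = if k = o then (1:ℝ) else 0) (hjo : j ≠ o) (f : α → ℝ) :
    ∑ k, (if k = j then (0:ℝ) else P' z k * f k) = f o := by
  have : ∀ k : α, (if k = j then (0:ℝ) else P' z k * f k) = (if k = o then f o else 0) := by
    intro k
    by_cases hko : k = o
    · subst hko; simp [Ne.symm hjo, hP'z]
    · by_cases hkj : k = j <;> simp [hkj, hko, hjo, hP'z]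
  simp_rw [this]
  rw [Finset.sum_ite_eq' Finset.univ o]
  simp

lemma ptwise (h0 : ∀ a b, 0 ≤ P a b) (h1 : ∀ a, ∑ b, P a b = 1) (hzo : z ≠ o)
    (hPz : ∀ k, k ≠ z → k ≠ o → P z k = 0)
    (hP'z : ∀ k, P' z k = if k = o then (1:ℝ) else 0)
    (heq : ∀ a, a ≠ z → ∀ b, P' a b = P a b)
    (hjz : j ≠ z) :
    ∀ τ, ∀ i, capt P τ i j ≤ capt P' τ i j := by
  have hsum : P z z + P z o = 1 := by
    have : ∀ b : α, P z b = (if b = z then P z z else 0) + (if b = o then P z o else 0) := by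
      intro b
      by_cases hb1 : b = z
      · subst hb1; simp [hzo]
      · by_cases hb2 : b = o
        · subst hb2; simp [hb1]
        · simp [hb1, hb2, hPz b hb1 hb2]
    have h := h1 z
    rw [Finset.sum_congr rfl (fun b _ => this b), Finset.sum_add_distrib,
      Finset.sum_ite_eq' Finset.univ z, Finset.sum_ite_eq' Finset.univ o] at h
    simpa using h
  intro τ
  induction τ with
  | zero => intro i; rw [capt_zero, capt_zero]
  | succ τ ih =>
    intro i
    by_cases hiz : i = z
    · rw [hiz]
      by_cases hjo : j = o
      · rw [hjo]
        have : capt P' (τ+1) z o = 1 := by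
          rw [capt_succ, hP'z]
          have : ∀ k : α, (if k = o then (0:ℝ) else P' z k * capt P' τ k o) = 0 := by
            intro k; by_cases hk : k = o <;> simp [hk, hP'z]
          simp [this]
        rw [this]
        exact capt_le_one P h0 h1 (τ+1) z o
      · have hr : capt P' (τ+1) z j = capt P' τ o j := by
          rw [capt_succ, rowdet_sum hP'z hjo, hP'z]
          simp [hjo]
        rw [hr]
        exact le_trans (leafC h0 hzo hPz hsum hjz hjo τ) (ih o)
    · rw [capt_succ, capt_succ]
      simp only [heq i hiz]
      refine add_le_add (le_refl _) (Finset.sum_le_sum fun k _ => ?_)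
      by_cases hk : k = j
      · simp [hk]
      · simp only [hk, if_false]
        exact mul_le_mul_of_nonneg_left (ih k) (h0 i k)


end Stmt10

/-- Dominant strategy on leaf nodes: if node `1` (index `⟨0,_⟩`) is a leaf of the
irreducible row-stochastic chain `P` with unique neighbor node `2` (index `⟨1,_⟩`),
then replacing row `1` by the deterministic move to its neighbor never decreases the
worst-case capture probability `min_{i,j} ℙ(T_ij ≤ τ)`. -/
theorem stmt_10 (n : ℕ) (hn : 3 ≤ n) (P P' : Matrix (Fin n) (Fin n) ℝ)
    (hP0 : ∀ a b, 0 ≤ P a b) (hP1 : ∀ a, ∑ b, P a b = 1)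
    (hirr : ∀ a b : Fin n, a ≠ b → ∃ m : ℕ, ∃ v : ℕ → Fin n,
      v 0 = a ∧ v m = b ∧ ∀ t < m, 0 < P (v t) (v (t + 1)))
    (hleaf : ∀ l : Fin n, l ≠ ⟨0, by omega⟩ → l ≠ ⟨1, by omega⟩ →
      P ⟨0, by omega⟩ l = 0 ∧ P l ⟨0, by omega⟩ = 0)
    (hP'row : ∀ l : Fin n, P' ⟨0, by omega⟩ l = if l = ⟨1, by omega⟩ then 1 else 0)
    (hP'rest : ∀ a : Fin n, a ≠ ⟨0, by omega⟩ → ∀ b : Fin n, P' a b = P a b)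
    (τ : ℕ) (hτ : 1 ≤ τ) :
    Finset.univ.inf' ⟨((⟨0, by omega⟩ : Fin n), (⟨0, by omega⟩ : Fin n)), Finset.mem_univ _⟩
        (fun p : Fin n × Fin n => ∑ t ∈ Finset.range τ, hitF P t p.1 p.2) ≤
      Finset.univ.inf' ⟨((⟨0, by omega⟩ : Fin n), (⟨0, by omega⟩ : Fin n)), Finset.mem_univ _⟩
        (fun p : Fin n × Fin n => ∑ t ∈ Finset.range τ, hitF P' t p.1 p.2) := by
  open Stmt10 in
  obtain ⟨s, rfl⟩ : ∃ s, τ = s + 1 := ⟨τ - 1, by omega⟩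
  set z : Fin n := ⟨0, by omega⟩ with hz
  set o : Fin n := ⟨1, by omega⟩ with ho
  set tw : Fin n := ⟨2, by omega⟩ with htw
  have hzo : z ≠ o := by simp [hz, ho, Fin.ext_iff]
  have htz : tw ≠ z := by simp [hz, htw, Fin.ext_iff]
  have hto : tw ≠ o := by simp [ho, htw, Fin.ext_iff]
  have hPz : ∀ k, k ≠ z → k ≠ o → P z k = 0 := fun k h1 h2 => (hleaf k h1 h2).1
  have hcol : ∀ i, i ≠ z → i ≠ o → P i z = 0 := fun i h1 h2 => (hleaf i h1 h2).2
  have hP'z : ∀ k, P' z k = if k = o then (1:ℝ) else 0 := hP'row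
  have heq : ∀ a, a ≠ z → ∀ b, P' a b = P a b := hP'rest
  apply Finset.le_inf'
  intro p _
  by_cases hjz : p.2 = z
  · by_cases hiz : p.1 = z
    · -- pair (z, z)
      have h1 : capt P (s+1) tw z ≤ capt P s o z := leafE hP0 hP1 hzo hcol s tw htz hto
      have h2 : capt P' s o z = capt P s o z := captP'_eq heq s o (Ne.symm hzo)
      have h3 : capt P' (s+1) z z = capt P' s o z := by
        rw [capt_succ, rowdet_sum hP'z hzo, hP'z]
        simp [hzo]
      have : (Finset.univ.inf' ⟨((z : Fin n), (z : Fin n)), Finset.mem_univ _⟩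
          (fun p : Fin n × Fin n => ∑ t ∈ Finset.range (s+1), hitF P t p.1 p.2))
          ≤ capt P (s+1) tw z := Finset.inf'_le _ (Finset.mem_univ (tw, z))
      rw [hiz, hjz]
      calc _ ≤ capt P (s+1) tw z := this
        _ ≤ capt P s o z := h1
        _ = capt P' s o z := h2.symm
        _ = capt P' (s+1) z z := h3.symm
    · -- pair (i, z) with i ≠ z
      have h2 : capt P' (s+1) p.1 z = capt P (s+1) p.1 z := captP'_eq heq (s+1) p.1 hiz
      rw [hjz]
      calc _ ≤ capt P (s+1) p.1 z := Finset.inf'_le _ (Finset.mem_univ (p.1, z))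
        _ = capt P' (s+1) p.1 z := h2.symm
  · -- j ≠ z
    calc _ ≤ capt P (s+1) p.1 p.2 := Finset.inf'_le _ (Finset.mem_univ (p.1, p.2))
      _ ≤ capt P' (s+1) p.1 p.2 := ptwise hP0 hP1 hzo hPz hP'z heq hjz (s+1) p.1
end

section
/- Let n ≥ 3 and τ ≥ 2 be integers. Define the n×n matrix P* (the optimal star-graph strategy with center node 1) by P*(1,1) = 0, P*(1,j) = 1/(n−1) for j ∈ {2,…,n}, P*(j,1) = 1 for j ∈ {2,…,n}, and P*(j,k) = 0 for j ∈ {2,…,n}, k ≠ 1. Then P* is row-stochastic and the minimum capture probability satisfies min_{i,j ∈ {1,…,n}} Σ_{t=1}^{τ} F*_t(i,j) = 1 − (1 − 1/(n−1))^{⌊τ/2⌋}, which equals 1 − (1 − 1/(n−1))^{(τ−1)/2} when τ is odd and 1 − (1 − 1/(n−1))^{τ/2} when τ is even. -/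
lemma auxsum_odd (p : ℝ) (τ : ℕ) :
    ∑ t ∈ Finset.range τ, (if t % 2 = 0 then (0:ℝ) else (1 - p) ^ (t / 2) * p)
      = 1 - (1 - p) ^ (τ / 2) := by
  induction τ with
  | zero => simp
  | succ τ ih =>
    rw [Finset.sum_range_succ, ih]
    rcases Nat.even_or_odd τ with h | h
    · have h2 : τ % 2 = 0 := Nat.even_iff.1 h
      have h3 : (τ + 1) / 2 = τ / 2 := by omega
      simp [h2, h3]
    · have h2 : τ % 2 = 1 := Nat.odd_iff.1 h
      have h3 : (τ + 1) / 2 = τ / 2 + 1 := by omega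
      rw [h3, pow_succ]
      simp only [h2]
      norm_num
      ring

lemma auxsum_even (p : ℝ) (τ : ℕ) :
    ∑ t ∈ Finset.range τ, (if t % 2 = 0 then (1 - p) ^ (t / 2) * p else (0:ℝ))
      = 1 - (1 - p) ^ ((τ + 1) / 2) := by
  induction τ with
  | zero => simp
  | succ τ ih =>
    rw [Finset.sum_range_succ, ih]
    rcases Nat.even_or_odd τ with h | h
    · have h2 : τ % 2 = 0 := Nat.even_iff.1 h
      have h3 : (τ + 1) / 2 = τ / 2 := by omega
      have h4 : (τ + 1 + 1) / 2 = τ / 2 + 1 := by omega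
      rw [h3, h4, pow_succ]
      simp only [h2]
      norm_num
      ring
    · have h2 : τ % 2 = 1 := Nat.odd_iff.1 h
      have h4 : (τ + 1 + 1) / 2 = (τ + 1) / 2 := by omega
      simp [h2, h4]

lemma key_lemma (n : ℕ) (hn : 3 ≤ n) (P : Matrix (Fin n) (Fin n) ℝ)
    (hP' : ∀ i j : Fin n, P i j =
      if i.val = 0 then (if j.val = 0 then 0 else 1 / ((n : ℝ) - 1))
      else (if j.val = 0 then 1 else 0)) :
    ∀ t (i j : Fin n), hitF P t i j =
      (if i.val = 0 then
        (if t % 2 = 0 then (if j.val = 0 then (0:ℝ)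
            else (1 - 1 / ((n : ℝ) - 1)) ^ (t / 2) * (1 / ((n : ℝ) - 1)))
         else (if j.val = 0 ∧ t = 1 then 1 else 0))
      else
        (if t % 2 = 0 then (if t = 0 ∧ j.val = 0 then 1 else 0)
         else (if j.val = 0 then 0 else (1 - 1 / ((n : ℝ) - 1)) ^ (t / 2) * (1 / ((n : ℝ) - 1))))) := by
  have hn' : (3:ℝ) ≤ (n:ℝ) := by exact_mod_cast hn
  have hN : (0:ℝ) < (n:ℝ) - 1 := by linarith
  have hNne : ((n:ℝ) - 1) ≠ 0 := ne_of_gt hN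
  set p : ℝ := 1 / ((n:ℝ) - 1) with hpdef
  have z_lt : 0 < n := by omega
  set z : Fin n := ⟨0, z_lt⟩ with hz
  have hzval : z.val = 0 := rfl
  have split : ∀ f : Fin n → ℝ, (∑ k, f k) = f z + ∑ k ∈ Finset.univ.erase z, f k :=
    fun f => (Finset.add_sum_erase _ f (Finset.mem_univ z)).symm
  have hcard : (((Finset.univ.erase z).card : ℕ) : ℝ) = (n:ℝ) - 1 := by
    rw [Finset.card_erase_of_mem (Finset.mem_univ z), Finset.card_univ, Fintype.card_fin,
      Nat.cast_sub (by omega)]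
    simp
  intro t
  induction t with
  | zero =>
    intro i j
    rw [show hitF P 0 = P from rfl, hP' i j]
    simp
  | succ t ih =>
    intro i j
    have hexp : hitF P (t + 1) i j
        = ∑ k, P i k * (hitF P t k j - if k = j then hitF P t k k else 0) := by
      show (P * (hitF P t - Matrix.diagonal fun i => hitF P t i i)) i j = _
      rw [Matrix.mul_apply]
      refine Finset.sum_congr rfl fun k _ => ?_
      rw [Matrix.sub_apply, Matrix.diagonal_apply]
    rw [hexp]
    have hval0 : ∀ k : Fin n, k.val = 0 → k = z := fun k hk => Fin.ext (by simp [hk, hzval])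
    by_cases hi : i.val = 0
    · -- center row
      rw [split]
      have hz0 : P i z = 0 := by rw [hP']; simp [hi, hzval]
      rw [hz0, zero_mul, zero_add]
      have hPk : ∀ k ∈ Finset.univ.erase z, P i k = p := by
        intro k hk
        have hk0 : k.val ≠ 0 := fun h => (Finset.mem_erase.1 hk).1 (hval0 k h)
        rw [hP']; simp [hi, hk0]
      rcases Nat.even_or_odd t with ht | ht
      · -- t even
        have ht2 : t % 2 = 0 := Nat.even_iff.1 ht
        have hmod : (t + 1) % 2 = 1 := by omega
        have hsum : (∑ k ∈ Finset.univ.erase z,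
              P i k * (hitF P t k j - if k = j then hitF P t k k else 0))
            = ∑ _k ∈ Finset.univ.erase z, p * (if t = 0 ∧ j.val = 0 then (1:ℝ) else 0) := by
          refine Finset.sum_congr rfl fun k hk => ?_
          have hk0 : k.val ≠ 0 := fun h => (Finset.mem_erase.1 hk).1 (hval0 k h)
          rw [hPk k hk, ih k j, ih k k]
          simp [hk0, ht2]
        rw [hsum, Finset.sum_const, nsmul_eq_mul, hcard]
        simp only [hi, if_true, hmod]
        norm_num
        by_cases hj : j.val = 0 <;> by_cases h0 : t = 0 <;>
          simp [hj, h0, hpdef] <;> field_simp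
      · -- t odd
        have ht2 : t % 2 = 1 := Nat.odd_iff.1 ht
        have hmod : (t + 1) % 2 = 0 := by omega
        by_cases hj : j.val = 0
        · have hsum : (∑ k ∈ Finset.univ.erase z,
                P i k * (hitF P t k j - if k = j then hitF P t k k else 0)) = 0 := by
            refine Finset.sum_eq_zero fun k hk => ?_
            have hk0 : k.val ≠ 0 := fun h => (Finset.mem_erase.1 hk).1 (hval0 k h)
            have hkj : k ≠ j := fun h => hk0 (h ▸ hj)
            rw [hPk k hk, ih k j]
            simp [hk0, ht2, hj, hkj]
          rw [hsum]
          simp [hi, hj, hmod]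
        · have hdiv : (t + 1) / 2 = t / 2 + 1 := by omega
          have hsum : (∑ k ∈ Finset.univ.erase z,
                P i k * (hitF P t k j - if k = j then hitF P t k k else 0))
              = ∑ k ∈ Finset.univ.erase z,
                  (p * ((1 - p) ^ (t / 2) * p)
                    - (if k = j then p * ((1 - p) ^ (t / 2) * p) else 0)) := by
            refine Finset.sum_congr rfl fun k hk => ?_
            have hk0 : k.val ≠ 0 := fun h => (Finset.mem_erase.1 hk).1 (hval0 k h)
            rw [hPk k hk, ih k j, ih k k]
            by_cases hkj : k = j
            · subst hkj; simp [hk0, ht2, hj]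
            · simp [hk0, ht2, hj, hkj]
              try ring
          rw [hsum, Finset.sum_sub_distrib, Finset.sum_const, nsmul_eq_mul, hcard,
            Finset.sum_ite_eq' (Finset.univ.erase z) j]
          have hjz : j ∈ Finset.univ.erase z :=
            Finset.mem_erase.2 ⟨fun h => hj (by rw [h]), Finset.mem_univ j⟩
          rw [if_pos hjz]
          simp only [hi, if_true, hmod, hj, if_false, hdiv, pow_succ]
          rw [hpdef]
          field_simp
    · -- leaf row
      rw [split]
      have hrest : (∑ k ∈ Finset.univ.erase z,
            P i k * (hitF P t k j - if k = j then hitF P t k k else 0)) = 0 := by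
        refine Finset.sum_eq_zero fun k hk => ?_
        have hk0 : k.val ≠ 0 := fun h => (Finset.mem_erase.1 hk).1 (hval0 k h)
        rw [hP']
        simp [hi, hk0]
      rw [hrest, add_zero]
      have hPz : P i z = 1 := by rw [hP']; simp [hi, hzval]
      rw [hPz, one_mul]
      rcases Nat.even_or_odd t with ht | ht
      · have ht2 : t % 2 = 0 := Nat.even_iff.1 ht
        have hmod : (t + 1) % 2 = 1 := by omega
        have hdiv : (t + 1) / 2 = t / 2 := by omega
        rw [ih z j]
        by_cases hjz' : z = j
        · rw [if_pos hjz', ih z z]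
          simp [hzval, ht2, hi, hmod, hdiv]
        · rw [if_neg hjz']
          simp [hzval, ht2, hi, hmod, hdiv]
      · have ht2 : t % 2 = 1 := Nat.odd_iff.1 ht
        have hmod : (t + 1) % 2 = 0 := by omega
        rw [ih z j]
        by_cases hj : j.val = 0
        · have hjz' : z = j := (hval0 j hj).symm
          rw [if_pos hjz', ih z z]
          simp [hzval, ht2, hi, hmod, hj]
        · have hjz' : z ≠ j := fun h => hj (h ▸ hzval)
          rw [if_neg hjz']
          simp [hzval, ht2, hi, hmod, hj]

/-- Value of the optimal star-graph strategy: with center node `1` (index `⟨0,_⟩`),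
`P*(1,1)=0`, `P*(1,j)=1/(n-1)`, `P*(j,1)=1` and `P*(j,k)=0` otherwise, `P*` is
row-stochastic and the minimum capture probability equals
`1 - (1 - 1/(n-1))^{⌊τ/2⌋}`. -/
theorem stmt_11 (n τ : ℕ) (hn : 3 ≤ n) (hτ : 2 ≤ τ)
    (P : Matrix (Fin n) (Fin n) ℝ)
    (hP : ∀ i j : Fin n, P i j =
      if i = ⟨0, by omega⟩ then (if j = ⟨0, by omega⟩ then 0 else 1 / ((n : ℝ) - 1))
      else (if j = ⟨0, by omega⟩ then 1 else 0)) :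
    (∀ i j, 0 ≤ P i j) ∧ (∀ i, ∑ j, P i j = 1) ∧
    Finset.univ.inf' ⟨((⟨0, by omega⟩ : Fin n), (⟨0, by omega⟩ : Fin n)), Finset.mem_univ _⟩
        (fun p : Fin n × Fin n => ∑ t ∈ Finset.range τ, hitF P t p.1 p.2) =
      1 - (1 - 1 / ((n : ℝ) - 1)) ^ (τ / 2) := by
  have hn' : (3:ℝ) ≤ (n:ℝ) := by exact_mod_cast hn
  have hN : (0:ℝ) < (n:ℝ) - 1 := by linarith
  have hNne : ((n:ℝ) - 1) ≠ 0 := ne_of_gt hN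
  have hP' : ∀ i j : Fin n, P i j =
      if i.val = 0 then (if j.val = 0 then 0 else 1 / ((n : ℝ) - 1))
      else (if j.val = 0 then 1 else 0) := by
    intro i j
    rw [hP i j]
    simp [Fin.ext_iff]
  have key := key_lemma n hn P hP'
  set p : ℝ := 1 / ((n:ℝ) - 1) with hpdef
  have hp0 : 0 ≤ p := le_of_lt (div_pos one_pos hN)
  have hp1 : p ≤ 1 := by rw [hpdef, div_le_one hN]; linarith
  have hq0 : (0:ℝ) ≤ 1 - p := by linarith
  have hq1 : (1:ℝ) - p ≤ 1 := by linarith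
  have z_lt : 0 < n := by omega
  set z : Fin n := ⟨0, z_lt⟩ with hz
  have hzval : z.val = 0 := rfl
  have split : ∀ f : Fin n → ℝ, (∑ k, f k) = f z + ∑ k ∈ Finset.univ.erase z, f k :=
    fun f => (Finset.add_sum_erase _ f (Finset.mem_univ z)).symm
  have hcard : (((Finset.univ.erase z).card : ℕ) : ℝ) = (n:ℝ) - 1 := by
    rw [Finset.card_erase_of_mem (Finset.mem_univ z), Finset.card_univ, Fintype.card_fin,
      Nat.cast_sub (by omega)]
    simp
  -- capture probabilities
  have cap : ∀ i j : Fin n, (∑ t ∈ Finset.range τ, hitF P t i j) =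
      if j.val = 0 then 1
      else (if i.val = 0 then 1 - (1 - p) ^ ((τ + 1) / 2) else 1 - (1 - p) ^ (τ / 2)) := by
    intro i j
    by_cases hj : j.val = 0
    · rw [if_pos hj]
      by_cases hi : i.val = 0
      · have hterm : ∀ t ∈ Finset.range τ, hitF P t i j = if t = 1 then (1:ℝ) else 0 := by
          intro t _
          rw [key t i j]
          by_cases h1 : t = 1
          · simp [hi, hj, h1]
          · simp only [hi, if_true, hj, h1, and_false, if_false, true_and]
            split_ifs <;> rfl
        rw [Finset.sum_congr rfl hterm, Finset.sum_ite_eq' (Finset.range τ) 1 (fun _ => (1:ℝ)),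
          if_pos (Finset.mem_range.2 (by omega))]
      · have hterm : ∀ t ∈ Finset.range τ, hitF P t i j = if t = 0 then (1:ℝ) else 0 := by
          intro t _
          rw [key t i j]
          by_cases h1 : t = 0
          · simp [hi, hj, h1]
          · simp only [hi, if_false, hj, h1, false_and, if_false, and_true]
            split_ifs <;> rfl
        rw [Finset.sum_congr rfl hterm, Finset.sum_ite_eq' (Finset.range τ) 0 (fun _ => (1:ℝ)),
          if_pos (Finset.mem_range.2 (by omega))]
    · rw [if_neg hj]
      by_cases hi : i.val = 0
      · rw [if_pos hi]
        have hterm : ∀ t ∈ Finset.range τ, hitF P t i j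
            = if t % 2 = 0 then (1 - p) ^ (t / 2) * p else 0 := by
          intro t _
          rw [key t i j]
          simp [hi, hj]
          try omega
        rw [Finset.sum_congr rfl hterm, auxsum_even]
      · rw [if_neg hi]
        have hterm : ∀ t ∈ Finset.range τ, hitF P t i j
            = if t % 2 = 0 then (0:ℝ) else (1 - p) ^ (t / 2) * p := by
          intro t _
          rw [key t i j]
          simp [hi, hj]
          try omega
        rw [Finset.sum_congr rfl hterm, auxsum_odd]
  refine ⟨?_, ?_, ?_⟩
  · intro i j
    rw [hP' i j]
    split_ifs <;> first | exact le_refl (0:ℝ) | exact hp0 | exact zero_le_one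
  · intro i
    rw [Finset.sum_congr rfl fun j _ => hP' i j]
    by_cases hi : i.val = 0
    · simp only [hi, if_true]
      rw [split]
      rw [if_pos hzval]
      have : ∀ k ∈ Finset.univ.erase z, (if (k:Fin n).val = 0 then (0:ℝ) else p) = p := by
        intro k hk
        have hk0 : k.val ≠ 0 := by
          intro h
          exact (Finset.mem_erase.1 hk).1 (Fin.ext (by simp [h, hzval]))
        rw [if_neg hk0]
      rw [Finset.sum_congr rfl this, Finset.sum_const, nsmul_eq_mul, hcard]
      rw [hpdef]
      field_simp
      norm_num
    · simp only [hi, if_false]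
      have : ∀ j : Fin n, (if (j:Fin n).val = 0 then (1:ℝ) else 0) = if j = z then 1 else 0 := by
        intro j
        congr 1
        simp [Fin.ext_iff, hzval]
      rw [Finset.sum_congr rfl fun j _ => this j,
        Finset.sum_ite_eq' Finset.univ z (fun _ => (1:ℝ)), if_pos (Finset.mem_univ z)]
  · apply le_antisymm
    · have hmem : ((⟨1, by omega⟩ : Fin n), (⟨1, by omega⟩ : Fin n)) ∈
          (Finset.univ : Finset (Fin n × Fin n)) := Finset.mem_univ _
      refine le_trans (Finset.inf'_le _ hmem) ?_
      rw [cap]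
      norm_num
    · apply Finset.le_inf'
      intro b _
      rw [cap b.1 b.2]
      have hpow0 : (0:ℝ) ≤ (1 - p) ^ (τ / 2) := pow_nonneg hq0 _
      split_ifs
      · linarith
      · have := pow_le_pow_of_le_one hq0 hq1 (show τ / 2 ≤ (τ + 1) / 2 by omega)
        linarith
      · exact le_rfl
end

section
/- Let n ≥ 3 and let P be an n×n row-stochastic matrix with P(j,k) = 0 whenever |j−k| > 1 (a line-graph strategy). Fix i ∈ {2,…,n−1} and 0 < ε ≤ P(i,i−1), and let P^ε be the matrix equal to P except P^ε(i,i+1) = P(i,i+1) + ε and P^ε(i,i−1) = P(i,i−1) − ε. Then for every τ ≥ 1, Σ_{t=1}^{τ} F^ε_t(1,n) ≥ Σ_{t=1}^{τ} F_t(1,n) and Σ_{t=1}^{τ} F^ε_t(n,1) ≤ Σ_{t=1}^{τ} F_t(n,1): shifting probability mass toward node n monotonically increases the 1→n capture probability and decreases the n→1 capture probability. -/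
namespace Stmt16Aux

variable {n : ℕ}

/-- Capture probability: probability of hitting `d` within `τ` steps starting from `j`. -/
noncomputable def H (Q : Matrix (Fin n) (Fin n) ℝ) (d : Fin n) (τ : ℕ) (j : Fin n) : ℝ :=
  ∑ t ∈ Finset.range τ, hitF Q t j d

/-- One-step value function. -/
noncomputable def g (Q : Matrix (Fin n) (Fin n) ℝ) (d : Fin n) (τ : ℕ) (k : Fin n) : ℝ :=
  if k = d then 1 else H Q d τ k

lemma H_eq (Q : Matrix (Fin n) (Fin n) ℝ) (d : Fin n) (τ : ℕ) (j : Fin n) :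
    H Q d τ j = ∑ t ∈ Finset.range τ, hitF Q t j d := rfl

lemma g_def (Q : Matrix (Fin n) (Fin n) ℝ) (d : Fin n) (τ : ℕ) (k : Fin n) :
    g Q d τ k = if k = d then 1 else H Q d τ k := rfl

lemma H_zero (Q : Matrix (Fin n) (Fin n) ℝ) (d j : Fin n) : H Q d 0 j = 0 := by
  simp [H]

lemma hitF_succ (Q : Matrix (Fin n) (Fin n) ℝ) (t : ℕ) (j d : Fin n) :
    hitF Q (t + 1) j d = ∑ k, Q j k * (if k = d then 0 else hitF Q t k d) := by
  show (Q * (hitF Q t - Matrix.diagonal fun i => hitF Q t i i)) j d = _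
  rw [Matrix.mul_apply]
  refine Finset.sum_congr rfl fun k _ => ?_
  by_cases hk : k = d
  · subst hk
    simp [Matrix.sub_apply, Matrix.diagonal_apply_eq]
  · simp [Matrix.sub_apply, Matrix.diagonal_apply_ne _ hk, hk]

lemma H_rec (Q : Matrix (Fin n) (Fin n) ℝ) (d : Fin n) (τ : ℕ) (j : Fin n) :
    H Q d (τ + 1) j = ∑ k, Q j k * g Q d τ k := by
  rw [H_eq, Finset.sum_range_succ']
  have h1 : ∑ t ∈ Finset.range τ, hitF Q (t + 1) j d
      = ∑ k, Q j k * (if k = d then 0 else H Q d τ k) := by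
    rw [Finset.sum_congr rfl fun t _ => hitF_succ Q t j d, Finset.sum_comm]
    refine Finset.sum_congr rfl fun k _ => ?_
    by_cases hk : k = d
    · simp [hk]
    · rw [← Finset.mul_sum]
      simp [hk, H_eq]
  have h0 : hitF Q 0 j d = Q j d := rfl
  rw [h1, h0]
  have h2 : ∀ k : Fin n, Q j k * g Q d τ k
      = Q j k * (if k = d then 0 else H Q d τ k) + (if k = d then Q j d else 0) := by
    intro k
    by_cases hk : k = d
    · subst hk; simp [g_def]
    · simp [g_def, hk]
  rw [Finset.sum_congr rfl fun k _ => h2 k, Finset.sum_add_distrib]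
  simp

lemma hitF_nonneg (Q : Matrix (Fin n) (Fin n) ℝ) (hQ0 : ∀ a b, 0 ≤ Q a b) :
    ∀ t (j k : Fin n), 0 ≤ hitF Q t j k := by
  intro t
  induction t with
  | zero => exact hQ0
  | succ t ih =>
    intro j d
    rw [hitF_succ]
    refine Finset.sum_nonneg fun k _ => mul_nonneg (hQ0 _ _) ?_
    split
    · exact le_refl 0
    · exact ih k d

lemma g_time_mono (Q : Matrix (Fin n) (Fin n) ℝ) (hQ0 : ∀ a b, 0 ≤ Q a b)
    (d : Fin n) (τ : ℕ) (k : Fin n) : g Q d τ k ≤ g Q d (τ + 1) k := by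
  rw [g_def, g_def]
  split_ifs
  · exact le_refl 1
  · rw [H_eq, H_eq, Finset.sum_range_succ]
    exact le_add_of_nonneg_right (hitF_nonneg Q hQ0 τ k d)

/-- extend adjacent monotonicity to full monotonicity -/
lemma chain_mono {f : Fin n → ℝ}
    (h : ∀ m : ℕ, ∀ hm : m + 1 < n, f ⟨m, Nat.lt_of_succ_lt hm⟩ ≤ f ⟨m + 1, hm⟩)
    {j k : Fin n} (hjk : j.val ≤ k.val) : f j ≤ f k := by
  obtain ⟨m, hm⟩ : ∃ m, k.val = j.val + m := ⟨k.val - j.val, by omega⟩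
  have key : ∀ (m : ℕ) (hk : j.val + m < n), f j ≤ f ⟨j.val + m, hk⟩ := by
    intro m
    induction m with
    | zero => intro hk; exact le_refl _
    | succ m ih =>
      intro hk
      have h1 : j.val + m < n := by omega
      exact (ih h1).trans (h (j.val + m) hk)
  have hk2 : k = ⟨j.val + m, by omega⟩ := Fin.ext hm
  rw [hk2]
  exact key m _

/-- monotonicity of the value function in the start node, target = last node -/
lemma g_mono (Q : Matrix (Fin n) (Fin n) ℝ) (hQ0 : ∀ a b, 0 ≤ Q a b)
    (hQ1 : ∀ a, ∑ b, Q a b = 1)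
    (hline : ∀ j k : Fin n, (j.val + 1 < k.val ∨ k.val + 1 < j.val) → Q j k = 0)
    (hn : 1 ≤ n) (τ : ℕ) :
    ∀ j k : Fin n, j.val ≤ k.val → g Q ⟨n - 1, by omega⟩ τ j ≤ g Q ⟨n - 1, by omega⟩ τ k := by
  set d : Fin n := ⟨n - 1, by omega⟩ with hd
  induction τ with
  | zero =>
    intro j k hjk
    simp only [g_def, H_zero]
    split_ifs with h1 h2
    · exact le_refl 1
    · exfalso
      apply h2
      apply Fin.ext
      have hjv : j.val = n - 1 := congrArg Fin.val h1
      have hkv : k.val < n := k.isLt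
      show k.val = n - 1
      omega
    · norm_num
    · exact le_refl 0
  | succ τ ih =>
    have adj : ∀ m : ℕ, ∀ hm : m + 1 < n,
        g Q d (τ + 1) ⟨m, Nat.lt_of_succ_lt hm⟩ ≤ g Q d (τ + 1) ⟨m + 1, hm⟩ := by
      intro m hm
      have hne : (⟨m, Nat.lt_of_succ_lt hm⟩ : Fin n) ≠ d := by
        intro h
        have : m = n - 1 := congrArg Fin.val h
        omega
      have hstep : g Q d (τ + 1) ⟨m, Nat.lt_of_succ_lt hm⟩ ≤ g Q d τ ⟨m + 1, hm⟩ := by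
        rw [g_def, if_neg hne, H_rec]
        calc ∑ k, Q ⟨m, Nat.lt_of_succ_lt hm⟩ k * g Q d τ k
            ≤ ∑ k, Q ⟨m, Nat.lt_of_succ_lt hm⟩ k * g Q d τ ⟨m + 1, hm⟩ := by
              refine Finset.sum_le_sum fun k _ => ?_
              by_cases hk : k.val ≤ m + 1
              · exact mul_le_mul_of_nonneg_left (ih k ⟨m + 1, hm⟩ hk) (hQ0 _ _)
              · rw [hline _ _ (Or.inl (show m + 1 < k.val by omega))]
                simp
          _ = g Q d τ ⟨m + 1, hm⟩ := by rw [← Finset.sum_mul, hQ1, one_mul]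
      exact hstep.trans (g_time_mono Q hQ0 d τ _)
    intro j k hjk
    exact chain_mono adj hjk

/-- antitonicity of the value function in the start node, target = node 0 -/
lemma g_anti (Q : Matrix (Fin n) (Fin n) ℝ) (hQ0 : ∀ a b, 0 ≤ Q a b)
    (hQ1 : ∀ a, ∑ b, Q a b = 1)
    (hline : ∀ j k : Fin n, (j.val + 1 < k.val ∨ k.val + 1 < j.val) → Q j k = 0)
    (hn : 1 ≤ n) (τ : ℕ) :
    ∀ j k : Fin n, j.val ≤ k.val → g Q ⟨0, by omega⟩ τ k ≤ g Q ⟨0, by omega⟩ τ j := by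
  set d : Fin n := ⟨0, by omega⟩ with hd
  induction τ with
  | zero =>
    intro j k hjk
    simp only [g_def, H_zero]
    split_ifs with h1 h2
    · exact le_refl 1
    · exfalso
      apply h2
      apply Fin.ext
      have hkv : k.val = 0 := congrArg Fin.val h1
      show j.val = 0
      omega
    · norm_num
    · exact le_refl 0
  | succ τ ih =>
    have adj : ∀ m : ℕ, ∀ hm : m + 1 < n,
        (fun x => -g Q d (τ + 1) x) ⟨m, Nat.lt_of_succ_lt hm⟩
          ≤ (fun x => -g Q d (τ + 1) x) ⟨m + 1, hm⟩ := by
      intro m hm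
      show -g Q d (τ + 1) _ ≤ -g Q d (τ + 1) _
      rw [neg_le_neg_iff]
      have hne : (⟨m + 1, hm⟩ : Fin n) ≠ d := by
        intro h
        have : m + 1 = 0 := congrArg Fin.val h
        omega
      have hstep : g Q d (τ + 1) ⟨m + 1, hm⟩ ≤ g Q d τ ⟨m, Nat.lt_of_succ_lt hm⟩ := by
        rw [g_def, if_neg hne, H_rec]
        calc ∑ k, Q ⟨m + 1, hm⟩ k * g Q d τ k
            ≤ ∑ k, Q ⟨m + 1, hm⟩ k * g Q d τ ⟨m, Nat.lt_of_succ_lt hm⟩ := by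
              refine Finset.sum_le_sum fun k _ => ?_
              by_cases hk : m ≤ k.val
              · exact mul_le_mul_of_nonneg_left (ih ⟨m, Nat.lt_of_succ_lt hm⟩ k hk) (hQ0 _ _)
              · rw [hline _ _ (Or.inr (show k.val + 1 < m + 1 by omega))]
                simp
          _ = g Q d τ ⟨m, Nat.lt_of_succ_lt hm⟩ := by rw [← Finset.sum_mul, hQ1, one_mul]
      exact hstep.trans (g_time_mono Q hQ0 d τ _)
    intro j k hjk
    have := chain_mono (f := fun x => -g Q d (τ + 1) x) adj hjk
    simp only [neg_le_neg_iff] at this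
    exact this

end Stmt16Aux

open Stmt16Aux in
set_option maxHeartbeats 1000000 in
/-- Monotonicity of end-to-end capture probabilities in a line graph: shifting
probability mass `ε` at an interior node `i` from the left edge to the right edge
increases `ℙ(T_1n ≤ τ)` and decreases `ℙ(T_n1 ≤ τ)` for every `τ ≥ 1`. -/
theorem stmt_16 (n : ℕ) (hn : 3 ≤ n)
    (P Pε : Matrix (Fin n) (Fin n) ℝ)
    (hP0 : ∀ a b, 0 ≤ P a b) (hP1 : ∀ a, ∑ b, P a b = 1)
    (hline : ∀ j k : Fin n, (j.val + 1 < k.val ∨ k.val + 1 < j.val) → P j k = 0)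
    (i : Fin n) (hi1 : 1 ≤ i.val) (hi2 : i.val ≤ n - 2)
    (ε : ℝ) (hε0 : 0 < ε) (hε1 : ε ≤ P i ⟨i.val - 1, by omega⟩)
    (hPεr : Pε i ⟨i.val + 1, by omega⟩ = P i ⟨i.val + 1, by omega⟩ + ε)
    (hPεl : Pε i ⟨i.val - 1, by omega⟩ = P i ⟨i.val - 1, by omega⟩ - ε)
    (hPεrest : ∀ a b : Fin n,
      ¬(a = i ∧ (b = (⟨i.val + 1, by omega⟩ : Fin n) ∨ b = (⟨i.val - 1, by omega⟩ : Fin n))) →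
      Pε a b = P a b)
    (τ : ℕ) (hτ : 1 ≤ τ) :
    (∑ t ∈ Finset.range τ, hitF P t ⟨0, by omega⟩ ⟨n - 1, by omega⟩ ≤
      ∑ t ∈ Finset.range τ, hitF Pε t ⟨0, by omega⟩ ⟨n - 1, by omega⟩) ∧
    (∑ t ∈ Finset.range τ, hitF Pε t ⟨n - 1, by omega⟩ ⟨0, by omega⟩ ≤
      ∑ t ∈ Finset.range τ, hitF P t ⟨n - 1, by omega⟩ ⟨0, by omega⟩) := by
  obtain ⟨r, hrv⟩ : ∃ r : Fin n, r.val = i.val + 1 := ⟨⟨i.val + 1, by omega⟩, rfl⟩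
  obtain ⟨l, hlv⟩ : ∃ l : Fin n, l.val = i.val - 1 := ⟨⟨i.val - 1, by omega⟩, rfl⟩
  have hre : (⟨i.val + 1, by omega⟩ : Fin n) = r :=
    Fin.ext (show (i.val + 1 : ℕ) = r.val from hrv.symm)
  have hle : (⟨i.val - 1, by omega⟩ : Fin n) = l :=
    Fin.ext (show (i.val - 1 : ℕ) = l.val from hlv.symm)
  rw [hre] at hPεr
  rw [hle] at hPεl hε1
  rw [hre, hle] at hPεrest
  have hrl : r ≠ l := by
    intro h
    have h2 : r.val = l.val := congrArg Fin.val h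
    rw [hrv, hlv] at h2
    omega
  -- key sum decomposition for the perturbed row
  have hsum : ∀ x : Fin n → ℝ,
      ∑ k, Pε i k * x k = (∑ k, P i k * x k) + ε * x r - ε * x l := by
    intro x
    have h2 : ∀ k : Fin n, Pε i k * x k
        = P i k * x k + ((if k = r then ε * x r else 0) + (if k = l then -(ε * x l) else 0)) := by
      intro k
      by_cases hkr : k = r
      · subst hkr
        rw [hPεr, if_pos rfl, if_neg hrl]
        ring
      · by_cases hkl : k = l
        · subst hkl
          rw [hPεl, if_neg (fun h => hrl h.symm), if_pos rfl]
          ring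
        · rw [hPεrest i k (by simp [hkr, hkl]), if_neg hkr, if_neg hkl]
          ring
    rw [Finset.sum_congr rfl fun k _ => h2 k, Finset.sum_add_distrib, Finset.sum_add_distrib]
    simp [Finset.sum_ite_eq']
    ring
  -- Pε is a nonnegative row-stochastic line matrix
  have hPε0 : ∀ a b, 0 ≤ Pε a b := by
    intro a b
    by_cases h : a = i ∧ (b = r ∨ b = l)
    · obtain ⟨ha, hb⟩ := h
      rw [ha]
      rcases hb with hb | hb <;> rw [hb]
      · rw [hPεr]
        have := hP0 i r
        linarith
      · rw [hPεl]
        linarith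
    · rw [hPεrest _ _ h]
      exact hP0 _ _
  have hPε1 : ∀ a, ∑ b, Pε a b = 1 := by
    intro a
    by_cases ha : a = i
    · rw [ha]
      have h2 := hsum (fun _ => 1)
      simp only [mul_one] at h2
      rw [h2, hP1]
      ring
    · rw [Finset.sum_congr rfl fun b _ => hPεrest a b (fun h => ha h.1)]
      exact hP1 a
  have hPεline : ∀ j k : Fin n, (j.val + 1 < k.val ∨ k.val + 1 < j.val) → Pε j k = 0 := by
    intro j k hjk
    by_cases h : j = i ∧ (k = r ∨ k = l)
    · exfalso
      obtain ⟨hj, hk⟩ := h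
      rw [hj] at hjk
      rcases hk with hk | hk <;> rw [hk] at hjk <;>
        simp only [hrv, hlv] at hjk <;> omega
    · rw [hPεrest _ _ h]
      exact hline _ _ hjk
  have hlr : l.val ≤ r.val := by rw [hrv, hlv]; omega
  obtain ⟨dN, hdN⟩ : ∃ d : Fin n, d.val = n - 1 := ⟨⟨n - 1, by omega⟩, rfl⟩
  obtain ⟨d0, hd0⟩ : ∃ d : Fin n, d.val = 0 := ⟨⟨0, by omega⟩, rfl⟩
  have hdNe : (⟨n - 1, by omega⟩ : Fin n) = dN := Fin.ext hdN.symm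
  have hd0e : (⟨0, by omega⟩ : Fin n) = d0 := Fin.ext hd0.symm
  -- comparison for target n-1
  have comp_up : ∀ τ' (j : Fin n), H P dN τ' j ≤ H Pε dN τ' j := by
    intro τ'
    induction τ' with
    | zero => intro j; rw [H_zero, H_zero]
    | succ τ' ih =>
      intro j
      have hg : ∀ k, g P dN τ' k ≤ g Pε dN τ' k := by
        intro k
        rw [g_def, g_def]
        split_ifs
        · exact le_refl 1
        · exact ih k
      rw [H_rec, H_rec]
      calc ∑ k, P j k * g P dN τ' k
          ≤ ∑ k, P j k * g Pε dN τ' k :=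
            Finset.sum_le_sum fun k _ => mul_le_mul_of_nonneg_left (hg k) (hP0 j k)
        _ ≤ ∑ k, Pε j k * g Pε dN τ' k := by
            by_cases hj : j = i
            · rw [hj, hsum (g Pε dN τ')]
              have hmono := g_mono Pε hPε0 hPε1 hPεline (by omega) τ' l r hlr
              rw [hdNe] at hmono
              have := mul_le_mul_of_nonneg_left hmono hε0.le
              linarith
            · refine le_of_eq (Finset.sum_congr rfl fun k _ => ?_)
              rw [hPεrest j k (fun h => hj h.1)]
  -- comparison for target 0
  have comp_down : ∀ τ' (j : Fin n), H Pε d0 τ' j ≤ H P d0 τ' j := by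
    intro τ'
    induction τ' with
    | zero => intro j; rw [H_zero, H_zero]
    | succ τ' ih =>
      intro j
      have hg : ∀ k, g Pε d0 τ' k ≤ g P d0 τ' k := by
        intro k
        rw [g_def, g_def]
        split_ifs
        · exact le_refl 1
        · exact ih k
      rw [H_rec, H_rec]
      calc ∑ k, Pε j k * g Pε d0 τ' k
          ≤ ∑ k, P j k * g Pε d0 τ' k := by
            by_cases hj : j = i
            · rw [hj, hsum (g Pε d0 τ')]
              have hanti := g_anti Pε hPε0 hPε1 hPεline (by omega) τ' l r hlr
              rw [hd0e] at hanti
              have := mul_le_mul_of_nonneg_left hanti hε0.le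
              linarith
            · refine le_of_eq (Finset.sum_congr rfl fun k _ => ?_)
              rw [hPεrest j k (fun h => hj h.1)]
        _ ≤ ∑ k, P j k * g P d0 τ' k :=
            Finset.sum_le_sum fun k _ => mul_le_mul_of_nonneg_left (hg k) (hP0 j k)
  constructor
  · show H P ⟨n - 1, by omega⟩ τ ⟨0, by omega⟩ ≤ H Pε ⟨n - 1, by omega⟩ τ ⟨0, by omega⟩
    have e1 := congrFun (congrFun (congrArg (H P) hdNe) τ) (⟨0, by omega⟩ : Fin n)
    have e2 := congrFun (congrFun (congrArg (H Pε) hdNe) τ) (⟨0, by omega⟩ : Fin n)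
    exact e1.trans_le ((comp_up τ _).trans_eq e2.symm)
  · show H Pε ⟨0, by omega⟩ τ ⟨n - 1, by omega⟩ ≤ H P ⟨0, by omega⟩ τ ⟨n - 1, by omega⟩
    have e1 := congrFun (congrFun (congrArg (H Pε) hd0e) τ) (⟨n - 1, by omega⟩ : Fin n)
    have e2 := congrFun (congrFun (congrArg (H P) hd0e) τ) (⟨n - 1, by omega⟩ : Fin n)
    exact e1.trans_le ((comp_down τ _).trans_eq e2.symm)
end

section
/- Let m ≥ 2 and let x₁,…,x_{m−1} be real numbers in [0,1]. Define the m×m matrices A and B by: A(1,2) = 1; A(k,k−1) = 1 − x_{k−1} for 2 ≤ k ≤ m; A(k,k+1) = x_{k−1} for 2 ≤ k ≤ m−1; all other entries of A are 0; and B is defined identically but with the parameter sequence reversed, i.e., B(1,2) = 1, B(k,k−1) = 1 − x_{m+1−k} for 2 ≤ k ≤ m, B(k,k+1) = x_{m+1−k} for 2 ≤ k ≤ m−1, all other entries 0. Then for every integer k ≥ 0, e₁ᵀ A^{k} 𝟙_m = e₁ᵀ B^{k} 𝟙_m, where e₁ is the first standard basis vector and 𝟙_m the all-ones vector. -/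
open Polynomial Matrix

noncomputable section StmtAux

namespace Stmt18Aux

/-! ### 2×2 transfer-matrix algebra -/

def Wm (r : ℝ) : Matrix (Fin 2) (Fin 2) ℝ[X] :=
  !![C r, X - 1; C r, X - C r]

def S2 : Matrix (Fin 2) (Fin 2) ℝ[X] :=
  !![2 * (X - 1), X - 1; X - 1, X]

def U2 : Matrix (Fin 1) (Fin 2) ℝ[X] := !![1, X - 1]
def V2 : Matrix (Fin 2) (Fin 1) ℝ[X] := !![1; 1]

lemma Wm_t (r : ℝ) : (Wm r)ᵀ = !![C r, C r; X - 1, X - C r] := by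
  refine Matrix.ext fun i j => ?_
  fin_cases i <;> fin_cases j <;> rfl

lemma U2_t : U2ᵀ = !![(1 : ℝ[X]); X - 1] := by
  refine Matrix.ext fun i j => ?_
  fin_cases i <;> fin_cases j <;> rfl

lemma WS (r : ℝ) : Wm r * S2 = S2 * (Wm r)ᵀ := by
  rw [Wm_t]
  refine Matrix.ext fun i j => ?_
  fin_cases i <;> fin_cases j <;>
    (simp [Wm, S2, Matrix.mul_apply, Fin.sum_univ_two]; ring)

lemma S2symm : S2ᵀ = S2 := by
  refine Matrix.ext fun i j => ?_
  fin_cases i <;> fin_cases j <;> rfl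

lemma SU : S2 * U2ᵀ = ((X ^ 2 - 1 : ℝ[X])) • V2 := by
  rw [U2_t]
  refine Matrix.ext fun i j => ?_
  fin_cases i <;> fin_cases j <;>
    (simp [S2, V2, Matrix.mul_apply, Fin.sum_univ_two, Matrix.smul_apply, smul_eq_mul]; ring)

def WP (l : List ℝ) : Matrix (Fin 2) (Fin 2) ℝ[X] := (l.map Wm).prod

lemma WP_rev_S (l : List ℝ) : WP l.reverse * S2 = S2 * (WP l)ᵀ := by
  induction l with
  | nil => simp [WP, S2symm]
  | cons a l ih =>
    have : WP (a :: l).reverse = WP l.reverse * Wm a := by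
      simp [WP, List.reverse_cons]
    rw [this, Matrix.mul_assoc, WS, ← Matrix.mul_assoc, ih, Matrix.mul_assoc,
      ← Matrix.transpose_mul]
    rfl

lemma US : U2 * S2 = ((X ^ 2 - 1 : ℝ[X])) • V2ᵀ := by
  have := congrArg Matrix.transpose SU
  rw [Matrix.transpose_mul, Matrix.transpose_transpose, S2symm, Matrix.transpose_smul] at this
  exact this

lemma WP_reversal (l : List ℝ) : U2 * WP l.reverse * V2 = U2 * WP l * V2 := by
  have hX : (X ^ 2 - 1 : ℝ[X]) ≠ 0 := by
    intro h
    have := congrArg (fun p => Polynomial.coeff p 2) h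
    simp [Polynomial.coeff_one] at this
  have key : ((X ^ 2 - 1 : ℝ[X])) • (U2 * WP l.reverse * V2) =
      ((X ^ 2 - 1 : ℝ[X])) • (U2 * WP l * V2) := by
    calc ((X ^ 2 - 1 : ℝ[X])) • (U2 * WP l.reverse * V2)
        = U2 * WP l.reverse * (((X ^ 2 - 1 : ℝ[X])) • V2) := by
          rw [Matrix.mul_smul]
      _ = U2 * ((WP l.reverse * S2) * U2ᵀ) := by
          rw [← SU, Matrix.mul_assoc, Matrix.mul_assoc]
      _ = (U2 * S2) * ((WP l)ᵀ * U2ᵀ) := by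
          rw [WP_rev_S, Matrix.mul_assoc, ← Matrix.mul_assoc U2]
      _ = ((X ^ 2 - 1 : ℝ[X])) • (V2ᵀ * ((WP l)ᵀ * U2ᵀ)) := by
          rw [US, Matrix.smul_mul]
      _ = ((X ^ 2 - 1 : ℝ[X])) • (U2 * WP l * V2)ᵀ := by
          rw [Matrix.transpose_mul, Matrix.transpose_mul]
      _ = ((X ^ 2 - 1 : ℝ[X])) • (U2 * WP l * V2) := by
          congr 1
          refine Matrix.ext fun i j => ?_
          fin_cases i; fin_cases j; rfl
  refine Matrix.ext fun i j => ?_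
  have := congrArg (fun M : Matrix (Fin 1) (Fin 1) ℝ[X] => M i j) key
  simp only [Matrix.smul_apply, smul_eq_mul] at this
  exact mul_left_cancel₀ hX this

/-! ### Continuants -/

def contD (c : ℕ → ℝ) : ℕ → ℝ[X]
  | 0 => 1
  | 1 => X
  | (n+2) => X * contD c (n+1) - C (c n) * contD c (n+1-1)

lemma contD_succ_succ (c : ℕ → ℝ) (n : ℕ) :
    contD c (n+2) = X * contD c (n+1) - C (c n) * contD c n := rfl

def cseq (a : ℕ → ℝ) (k : ℕ) : ℝ := (if k = 0 then 1 else a k) * (1 - a (k+1))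

lemma U2_WP_range (a : ℕ → ℝ) (k : ℕ) :
    U2 * WP ((List.range k).map fun i => a (i+1)) =
      !![C (if k = 0 then 1 else a k) * contD (cseq a) k,
         contD (cseq a) (k+1) - C (if k = 0 then 1 else a k) * contD (cseq a) k] := by
  induction k with
  | zero =>
    refine Matrix.ext fun i j => ?_
    fin_cases i <;> fin_cases j <;>
      simp [U2, WP, contD, Matrix.mul_apply, Fin.sum_univ_two, Matrix.one_apply]
  | succ k ih =>
    have hl : (List.range (k+1)).map (fun i => a (i+1)) =
        ((List.range k).map fun i => a (i+1)) ++ [a (k+1)] := by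
      rw [List.range_succ, List.map_append]; rfl
    have hWP : WP ((List.range (k+1)).map fun i => a (i+1)) =
        WP ((List.range k).map fun i => a (i+1)) * Wm (a (k+1)) := by
      rw [hl]; simp [WP]
    rw [hWP, ← Matrix.mul_assoc, ih]
    have hrec := contD_succ_succ (cseq a) k
    refine Matrix.ext fun i j => ?_
    fin_cases i <;> fin_cases j <;>
      · simp only [Wm, Matrix.mul_apply, Fin.sum_univ_two, Nat.succ_ne_zero, if_false,
          Matrix.cons_val', Matrix.cons_val_zero, Matrix.cons_val_one, Matrix.head_cons,
          Matrix.head_fin_const, Matrix.empty_val', Matrix.cons_val_fin_one, Matrix.of_apply]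
        rw [hrec]
        simp only [cseq, Fin.mk_zero, Fin.mk_one, Matrix.cons_val_zero, Matrix.cons_val_one,
          Matrix.head_cons]
        split_ifs <;> ((try simp only [Polynomial.C_mul, Polynomial.C_sub, Polynomial.C_1]); ring)

lemma U2_WP_V2 (a : ℕ → ℝ) (k : ℕ) :
    (U2 * WP ((List.range k).map fun i => a (i+1)) * V2) 0 0 = contD (cseq a) (k+1) := by
  rw [U2_WP_range]
  simp [V2, Matrix.mul_apply, Fin.sum_univ_two]

/-! ### Tridiagonal determinants -/

def triM (f g : ℕ → ℝ[X]) (n : ℕ) : Matrix (Fin n) (Fin n) ℝ[X] :=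
  Matrix.of fun i j =>
    if (i : ℕ) = j then X
    else if (j : ℕ) + 1 = i then f j
    else if (j : ℕ) = (i : ℕ) + 1 then g i
    else 0

lemma triM_apply (f g : ℕ → ℝ[X]) (n : ℕ) (i j : Fin n) :
    triM f g n i j =
      if (i : ℕ) = (j : ℕ) then X
      else if (j : ℕ) + 1 = (i : ℕ) then f j
      else if (j : ℕ) = (i : ℕ) + 1 then g i
      else 0 := rfl

theorem det_triM (f g : ℕ → ℝ[X]) (c : ℕ → ℝ)
    (hc : ∀ k, f k * g k = C (c k)) :
    ∀ n, (triM f g n).det = contD c n := by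
  intro n
  induction n using Nat.strong_induction_on with
  | _ n ih =>
    match n with
    | 0 => simp [triM, contD]
    | 1 =>
      rw [show (triM f g 1) = !![(X : ℝ[X])] from Matrix.ext fun i j => by
        fin_cases i; fin_cases j; rfl]
      simp [contD]
    | (n+2) =>
      rw [Matrix.det_succ_row (triM f g (n+2)) (Fin.last (n+1))]
      rw [Fin.sum_univ_castSucc, Fin.sum_univ_castSucc]
      -- the sum over `j : Fin n` vanishes
      have hzero : ∀ j : Fin n,
          (-1 : ℝ[X]) ^ ((Fin.last (n+1) : ℕ) + ((j.castSucc.castSucc : Fin (n+2)) : ℕ)) *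
            triM f g (n+2) (Fin.last (n+1)) j.castSucc.castSucc *
            ((triM f g (n+2)).submatrix (Fin.last (n+1)).succAbove
              (j.castSucc.castSucc).succAbove).det = 0 := by
        intro j
        have hjn : (j:ℕ) < n := j.isLt
        have h0 : triM f g (n+2) (Fin.last (n+1)) j.castSucc.castSucc = 0 := by
          show (if ((n+1:ℕ) = (j:ℕ)) then (X:ℝ[X])
            else if (j:ℕ) + 1 = (n+1:ℕ) then f j
            else if (j:ℕ) = (n+1:ℕ) + 1 then g (n+1) else 0) = 0
          rw [if_neg (by omega), if_neg (by omega), if_neg (by omega)]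
        rw [h0, mul_zero, zero_mul]
      rw [Finset.sum_eq_zero fun j _ => hzero j, zero_add]
      -- the diagonal term
      have hT2sub : (triM f g (n+2)).submatrix (Fin.last (n+1)).succAbove
          (Fin.last (n+1)).succAbove = triM f g (n+1) := by
        rw [Fin.succAbove_last]
        exact Matrix.ext fun i j => rfl
      have hT2coef : triM f g (n+2) (Fin.last (n+1)) (Fin.last (n+1)) = X := by
        show (if ((n+1:ℕ) = (n+1:ℕ)) then (X:ℝ[X]) else _) = X
        rw [if_pos rfl]
      have hT2sign : (-1 : ℝ[X]) ^ ((Fin.last (n+1) : ℕ) + (Fin.last (n+1) : ℕ)) = 1 := by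
        rw [show ((Fin.last (n+1) : ℕ) + (Fin.last (n+1) : ℕ)) = (n+1) + (n+1) from rfl]
        exact Even.neg_one_pow ⟨n+1, rfl⟩
      -- the subdiagonal term
      have hT1coef : triM f g (n+2) (Fin.last (n+1)) (Fin.last n).castSucc = f n := by
        show (if ((n+1:ℕ) = (n:ℕ)) then (X:ℝ[X])
          else if (n:ℕ) + 1 = (n+1:ℕ) then f n else _) = f n
        rw [if_neg (by omega), if_pos rfl]
      have hT1sign : (-1 : ℝ[X]) ^ ((Fin.last (n+1) : ℕ) + ((Fin.last n).castSucc : ℕ)) = -1 := by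
        rw [show ((Fin.last (n+1) : ℕ) + ((Fin.last n).castSucc : ℕ)) = 2*n+1 from by
          show (n+1) + n = 2*n+1; omega]
        exact Odd.neg_one_pow ⟨n, by omega⟩
      -- the cross minor
      have hrows : (Fin.last (n+1)).succAbove = Fin.castSucc := Fin.succAbove_last
      have hrows' : (Fin.last n).succAbove = Fin.castSucc := Fin.succAbove_last
      have hq2 : ((Fin.last n).castSucc).succAbove (Fin.last n) = (Fin.last n).succ :=
        Fin.succAbove_of_le_castSucc _ _ (le_refl _)
      have hq1 : ∀ j : Fin n, ((Fin.last n).castSucc).succAbove j.castSucc = j.castSucc.castSucc :=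
        fun j => Fin.succAbove_of_castSucc_lt _ _ (by
          rw [Fin.lt_def]
          simpa using j.isLt)
      have hM1 : ((triM f g (n+2)).submatrix (Fin.last (n+1)).succAbove
          ((Fin.last n).castSucc).succAbove).det = g n * (triM f g n).det := by
        rw [Matrix.det_succ_column ((triM f g (n+2)).submatrix (Fin.last (n+1)).succAbove
          ((Fin.last n).castSucc).succAbove) (Fin.last n), Fin.sum_univ_castSucc]
        have hent0 : ∀ i : Fin n, (triM f g (n+2)).submatrix (Fin.last (n+1)).succAbove
            ((Fin.last n).castSucc).succAbove i.castSucc (Fin.last n) = 0 := by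
          intro i
          rw [Matrix.submatrix_apply, hrows, hq2, triM_apply]
          simp only [Fin.coe_castSucc, Fin.val_succ, Fin.val_last]
          rw [if_neg (by omega), if_neg (by omega), if_neg (by omega)]
        rw [Finset.sum_eq_zero (fun i (_ : i ∈ Finset.univ) => by
          rw [hent0 i, mul_zero, zero_mul]), zero_add]
        have hentg : (triM f g (n+2)).submatrix (Fin.last (n+1)).succAbove
            ((Fin.last n).castSucc).succAbove (Fin.last n) (Fin.last n) = g n := by
          rw [Matrix.submatrix_apply, hrows, hq2, triM_apply]
          simp only [Fin.coe_castSucc, Fin.val_succ, Fin.val_last]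
          rw [if_neg (by omega), if_neg (by omega)]
          simp
        have hsign : (-1:ℝ[X])^(((Fin.last n):ℕ) + ((Fin.last n):ℕ)) = 1 := by
          rw [show ((Fin.last n):ℕ) + ((Fin.last n):ℕ) = n + n from rfl]
          exact Even.neg_one_pow ⟨n, rfl⟩
        have hmin : (((triM f g (n+2)).submatrix (Fin.last (n+1)).succAbove
            ((Fin.last n).castSucc).succAbove).submatrix (Fin.last n).succAbove
            (Fin.last n).succAbove) = triM f g n := by
          refine Matrix.ext fun i j => ?_
          rw [Matrix.submatrix_apply, Matrix.submatrix_apply, hrows', hrows, hq1 j,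
            triM_apply, triM_apply]
          rfl
        rw [hentg, hsign, hmin]
        ring
      rw [hT2sub, hT2coef, hT2sign, hT1coef, hT1sign, hM1, ih (n+1) (by omega), ih n (by omega),
        contD_succ_succ]
      linear_combination (-(contD c n)) * hc n

lemma charmatrix_eq_triM (m : ℕ) (y : ℕ → ℝ) (M : Matrix (Fin m) (Fin m) ℝ)
    (hM : ∀ r l : Fin m, M r l =
      if r.val = 0 then (if l.val = 1 then 1 else 0)
      else if l.val + 1 = r.val then 1 - y r.val
      else if l.val = r.val + 1 then y r.val
      else 0) :
    charmatrix M =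
      triM (fun k => -C (1 - y (k+1))) (fun k => -C (if k = 0 then 1 else y k)) m := by
  refine Matrix.ext fun i j => ?_
  rw [triM_apply]
  by_cases hij : (i : ℕ) = (j : ℕ)
  · have : i = j := Fin.ext hij
    subst this
    rw [if_pos rfl, charmatrix_apply_eq]
    have h0 : M i i = 0 := by rw [hM]; split_ifs <;> first | rfl | omega
    rw [h0, map_zero, sub_zero]
  · have hne : i ≠ j := fun h => hij (by rw [h])
    rw [charmatrix_apply_ne _ _ _ hne, if_neg hij]
    by_cases h1 : (j:ℕ) + 1 = (i:ℕ)
    · rw [if_pos h1]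
      have h0 : M i j = 1 - y ((j:ℕ)+1) := by
        rw [hM, if_neg (by omega), if_pos h1, ← h1]
      rw [h0]
    · rw [if_neg h1]
      by_cases h2 : (j:ℕ) = (i:ℕ) + 1
      · rw [if_pos h2]
        have h0 : M i j = (if (i:ℕ) = 0 then 1 else y (i:ℕ)) := by
          rw [hM]
          by_cases h3 : (i:ℕ) = 0
          · rw [if_pos h3, if_pos (by omega : (j:ℕ) = 1), if_pos h3]
          · rw [if_neg h3, if_neg (by omega), if_pos h2, if_neg h3]
        rw [h0]
      · rw [if_neg h2]
        have h0 : M i j = 0 := by rw [hM]; split_ifs <;> first | rfl | omega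
        rw [h0, map_zero, neg_zero]

lemma reverse_map_range {α : Type*} (f : ℕ → α) : ∀ k : ℕ,
    ((List.range k).map f).reverse = (List.range k).map (fun i => f (k - 1 - i)) := by
  intro k
  induction k with
  | zero => simp
  | succ k ih =>
    have h1 : ((List.range (k+1)).map f).reverse = f k :: ((List.range k).map f).reverse := by
      rw [List.range_succ]; simp
    have h2 : (List.range (k+1)).map (fun i => f (k + 1 - 1 - i)) =
        f k :: (List.range k).map (fun i => f (k - 1 - i)) := by
      rw [List.range_succ_eq_map]
      simp only [List.map_cons, List.map_map]
      norm_num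
      intro a _
      congr 1
      omega
    rw [h1, h2, ih]

section Shape

variable (m : ℕ) (hm : 2 ≤ m) (y : ℕ → ℝ) (M : Matrix (Fin m) (Fin m) ℝ)
variable (hM : ∀ r l : Fin m, M r l =
      if r.val = 0 then (if l.val = 1 then 1 else 0)
      else if l.val + 1 = r.val then 1 - y r.val
      else if l.val = r.val + 1 then y r.val
      else 0)

include hM

/-- band structure: `M^k` row 0 is supported on columns `≤ k`. -/
lemma band (z : Fin m) (hz : z.val = 0) :
    ∀ k : ℕ, ∀ j : Fin m, (k : ℕ) < j.val → (M ^ k) z j = 0 := by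
  intro k
  induction k with
  | zero =>
    intro j hj
    rw [pow_zero, Matrix.one_apply, if_neg]
    intro h; rw [h] at hz; omega
  | succ k ih =>
    intro j hj
    rw [pow_succ, Matrix.mul_apply]
    refine Finset.sum_eq_zero fun l _ => ?_
    by_cases hl : (k:ℕ) < l.val
    · rw [ih l hl, zero_mul]
    · have : M l j = 0 := by
        rw [hM]; split_ifs <;> first | rfl | omega
      rw [this, mul_zero]

/-- row sums below the last row are 1. -/
lemma rowSumOne (l : Fin m) (hl : l.val + 2 ≤ m) : ∑ j, M l j = 1 := by
  by_cases h0 : l.val = 0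
  · have : ∀ j : Fin m, M l j = if j = (⟨1, by omega⟩ : Fin m) then 1 else 0 := by
      intro j
      rw [hM, if_pos h0]
      congr 1
      simp [Fin.ext_iff]
    rw [Finset.sum_congr rfl fun j _ => this j]
    simp
  · have : ∀ j : Fin m, M l j =
        (if j = (⟨l.val - 1, by omega⟩ : Fin m) then 1 - y l.val else 0)
        + (if j = (⟨l.val + 1, by omega⟩ : Fin m) then y l.val else 0) := by
      intro j
      rw [hM, if_neg h0]
      simp only [Fin.ext_iff]
      split_ifs <;> first | ring1 | (exfalso; omega)
    rw [Finset.sum_congr rfl fun j _ => this j, Finset.sum_add_distrib]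
    rw [Finset.sum_ite_eq' Finset.univ _ (fun _ => 1 - y l.val),
      Finset.sum_ite_eq' Finset.univ _ (fun _ => y l.val)]
    simp

/-- first `m` values of the row-sum sequence are all 1. -/
lemma sum_row_eq_one (z : Fin m) (hz : z.val = 0) :
    ∀ k : ℕ, k + 1 ≤ m → ∑ j, (M ^ k) z j = 1 := by
  intro k
  induction k with
  | zero =>
    intro _
    rw [pow_zero]
    simp [Matrix.one_apply]
  | succ k ih =>
    intro hk
    have hstep : ∑ j, (M ^ (k+1)) z j = ∑ l, (M ^ k) z l * (∑ j, M l j) := by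
      rw [pow_succ]
      simp_rw [Matrix.mul_apply, Finset.mul_sum]
      rw [Finset.sum_comm]
    rw [hstep]
    have hterm : ∀ l : Fin m, (M ^ k) z l * (∑ j, M l j) = (M ^ k) z l := by
      intro l
      by_cases hl : (k:ℕ) < l.val
      · rw [band m y M hM z hz k l hl, zero_mul]
      · rw [rowSumOne m y M hM l (by omega), mul_one]
    rw [Finset.sum_congr rfl fun l _ => hterm l]
    exact ih (by omega)

end Shape

lemma charpoly_rec (m : ℕ) (N : Matrix (Fin m) (Fin m) ℝ) (z : Fin m) (n : ℕ) :
    ∑ i ∈ Finset.range (m+1), N.charpoly.coeff i * (∑ j, (N ^ (n+i)) z j) = 0 := by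
  have hdeg : N.charpoly.natDegree = m := by
    rw [Matrix.charpoly_natDegree_eq_dim, Fintype.card_fin]
  have h0 : (Polynomial.aeval N) N.charpoly = 0 := N.aeval_self_charpoly
  rw [Polynomial.aeval_eq_sum_range, hdeg] at h0
  have h1 : (0 : Matrix (Fin m) (Fin m) ℝ) =
      ∑ i ∈ Finset.range (m+1), N.charpoly.coeff i • (N ^ (n+i)) := by
    have := congrArg (fun P => N ^ n * P) h0
    simp only [mul_zero] at this
    rw [← this, Finset.mul_sum]
    refine Finset.sum_congr rfl fun i _ => ?_
    rw [mul_smul_comm, pow_add]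
  have h2 := congrArg (fun P : Matrix (Fin m) (Fin m) ℝ => ∑ j, P z j) h1
  simp only [Matrix.zero_apply, Finset.sum_const_zero] at h2
  calc ∑ i ∈ Finset.range (m+1), N.charpoly.coeff i * (∑ j, (N ^ (n+i)) z j)
      = ∑ j, ∑ i ∈ Finset.range (m+1), N.charpoly.coeff i * (N ^ (n+i)) z j := by
        rw [Finset.sum_comm]
        exact Finset.sum_congr rfl fun i _ => by rw [Finset.mul_sum]
    _ = ∑ j, (∑ i ∈ Finset.range (m+1), N.charpoly.coeff i • N ^ (n+i)) z j := by
        refine Finset.sum_congr rfl fun j _ => ?_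
        rw [Matrix.sum_apply]
        exact (Finset.sum_congr rfl fun i _ => by rw [Matrix.smul_apply, smul_eq_mul]).symm
    _ = 0 := h2.symm

lemma charpoly_eq_prod (m : ℕ) (hm : 2 ≤ m) (y : ℕ → ℝ) (M : Matrix (Fin m) (Fin m) ℝ)
    (hM : ∀ r l : Fin m, M r l =
      if r.val = 0 then (if l.val = 1 then 1 else 0)
      else if l.val + 1 = r.val then 1 - y r.val
      else if l.val = r.val + 1 then y r.val
      else 0) :
    M.charpoly = (U2 * WP ((List.range (m-1)).map fun i => y (i+1)) * V2) 0 0 := by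
  have hc : ∀ k, (fun k => -C (1 - y (k+1))) k * (fun k => -C (if k = 0 then 1 else y k)) k
      = C (cseq y k) := by
    intro k
    simp only
    rw [neg_mul_neg, ← Polynomial.C_mul]
    congr 1
    simp only [cseq]
    ring
  have h1 : M.charpoly = (charmatrix M).det := rfl
  rw [h1, charmatrix_eq_triM m y M hM, det_triM _ _ (cseq y) hc m,
    U2_WP_V2 y (m-1), show m - 1 + 1 = m by omega]

end Stmt18Aux

end StmtAux

open Stmt18Aux in
/-- Symmetry of the line-graph capture probabilities: for the tridiagonal substochastic
matrices `A` (parameters `x₁, …, x_{m-1} ∈ [0,1]`) and `B` (the reversed parameters),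
one has `e₁ᵀ A^k 𝟙 = e₁ᵀ B^k 𝟙` for every `k ≥ 0`. (Rows indexed `0, …, m-1`;
1-indexed row `k` corresponds to index `k - 1`.) -/
theorem stmt_18 (m : ℕ) (hm : 2 ≤ m) (x : ℕ → ℝ)
    (hx : ∀ r : ℕ, 1 ≤ r → r ≤ m - 1 → 0 ≤ x r ∧ x r ≤ 1)
    (A B : Matrix (Fin m) (Fin m) ℝ)
    (hA : ∀ r l : Fin m, A r l =
      if r.val = 0 then (if l.val = 1 then 1 else 0)
      else if l.val + 1 = r.val then 1 - x r.val
      else if l.val = r.val + 1 then x r.val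
      else 0)
    (hB : ∀ r l : Fin m, B r l =
      if r.val = 0 then (if l.val = 1 then 1 else 0)
      else if l.val + 1 = r.val then 1 - x (m - r.val)
      else if l.val = r.val + 1 then x (m - r.val)
      else 0)
    (k : ℕ) :
    ∑ j, (A ^ k) ⟨0, by omega⟩ j = ∑ j, (B ^ k) ⟨0, by omega⟩ j := by
  classical
  have hzm : (0 : ℕ) < m := by omega
  set z : Fin m := ⟨0, hzm⟩ with hzdef
  show ∑ j, (A ^ k) z j = ∑ j, (B ^ k) z j
  have hBshape : ∀ r l : Fin m, B r l =
      if r.val = 0 then (if l.val = 1 then 1 else 0)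
      else if l.val + 1 = r.val then 1 - (fun k => x (m - k)) r.val
      else if l.val = r.val + 1 then (fun k => x (m - k)) r.val
      else 0 := hB
  have hcp : A.charpoly = B.charpoly := by
    rw [charpoly_eq_prod m hm x A hA, charpoly_eq_prod m hm (fun k => x (m-k)) B hBshape]
    have hlist : (List.range (m-1)).map (fun i => (fun k => x (m-k)) (i+1)) =
        ((List.range (m-1)).map (fun i => x (i+1))).reverse := by
      rw [reverse_map_range]
      refine List.map_congr_left fun i hi => ?_
      rw [List.mem_range] at hi
      simp only
      congr 1
      omega
    rw [hlist, WP_reversal]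
  induction k using Nat.strong_induction_on with
  | _ k ih =>
    by_cases hk : k + 1 ≤ m
    · rw [sum_row_eq_one m x A hA z rfl k hk, sum_row_eq_one m (fun k => x (m - k)) B hBshape z rfl k hk]
    · obtain ⟨n, rfl⟩ : ∃ n, k = n + m := ⟨k - m, by omega⟩
      have hrA := charpoly_rec m A z n
      have hrB := charpoly_rec m B z n
      rw [Finset.sum_range_succ] at hrA hrB
      have hdegA : A.charpoly.natDegree = m := by
        rw [Matrix.charpoly_natDegree_eq_dim, Fintype.card_fin]
      have hmonA : A.charpoly.coeff m = 1 := by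
        have h := A.charpoly_monic
        rw [Polynomial.Monic, Polynomial.leadingCoeff, hdegA] at h
        exact h
      have hmonB : B.charpoly.coeff m = 1 := by rw [← hcp]; exact hmonA
      rw [hmonA, one_mul] at hrA
      rw [hmonB, one_mul] at hrB
      have hAe : ∑ j, (A ^ (n+m)) z j =
          -∑ i ∈ Finset.range m, A.charpoly.coeff i * ∑ j, (A^(n+i)) z j := by linarith
      have hBe : ∑ j, (B ^ (n+m)) z j =
          -∑ i ∈ Finset.range m, B.charpoly.coeff i * ∑ j, (B^(n+i)) z j := by linarith
      rw [hAe, hBe, hcp]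
      congr 1
      refine Finset.sum_congr rfl fun i hi => ?_
      rw [Finset.mem_range] at hi
      rw [ih (n+i) (by omega)]
end
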